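/- arXiv:1807.10832 — 12 statements merged into one kernel-verified Lean document; each statement's English description precedes it below -/
import Mathlib

section
/- Let F : ℝⁿ → ℝ be differentiable with L-Lipschitz continuous gradient (L > 0), let G : ℝⁿ → ℝ be differentiable and γ-strongly convex (γ > 0), and let x₀, x̂ ∈ ℝⁿ satisfy ∇G(x₀) = ∇F(x₀) and G(x̂) ≤ G(x₀). Then for every η ∈ (0,1) and every α with 0 < α ≤ min{1, γ(1−η)/L}, the Armijo condition F(x₀ + α(x̂ − x₀)) ≤ F(x₀) + η α ⟨∇F(x₀), x̂ − x₀⟩ holds. -/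
open InnerProductSpace

variable {E : Type*} [NormedAddCommGroup E] [InnerProductSpace ℝ E] [CompleteSpace E]

lemma line_hasDerivAt (φ : E → ℝ) (hφ : Differentiable ℝ φ) (x d : E) (t : ℝ) :
    HasDerivAt (fun s : ℝ => φ (x + s • d)) (inner ℝ (gradient φ (x + t • d)) d : ℝ) t := by
  have h2 : HasDerivAt (fun s : ℝ => x + s • d) d t := by
    simpa using ((hasDerivAt_id t).smul_const d).const_add x
  have h1 := (hφ (x + t • d)).hasGradientAt.hasFDerivAt
  have h3 := h1.comp_hasDerivAt t h2
  have h4 : HasDerivAt (fun s : ℝ => φ (x + s • d)) _ t := h3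
  simpa [InnerProductSpace.toDual_apply_apply] using h4

lemma descent_lemma (F : E → ℝ) (L : ℝ) (hL : 0 ≤ L) (hF : Differentiable ℝ F)
    (hFLip : ∀ x y, ‖gradient F x - gradient F y‖ ≤ L * ‖x - y‖) (x c : E) :
    F (x + c) ≤ F x + (inner ℝ (gradient F x) c : ℝ) + L / 2 * ‖c‖ ^ 2 := by
  have hcontg : Continuous (gradient F) := by
    refine (LipschitzWith.of_dist_le_mul (K := L.toNNReal) ?_).continuous
    intro a b
    simpa [dist_eq_norm, Real.coe_toNNReal L hL] using hFLip a b
  have hcont : Continuous fun t : ℝ => (inner ℝ (gradient F (x + t • c)) c : ℝ) := by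
    exact (Continuous.inner (hcontg.comp (by continuity)) continuous_const)
  have hftc : ∫ t in (0:ℝ)..1, (inner ℝ (gradient F (x + t • c)) c : ℝ)
      = F (x + c) - F x := by
    have := intervalIntegral.integral_eq_sub_of_hasDerivAt
      (f := fun s : ℝ => F (x + s • c))
      (f' := fun t : ℝ => (inner ℝ (gradient F (x + t • c)) c : ℝ))
      (a := 0) (b := 1)
      (fun t _ => line_hasDerivAt F hF x c t)
      (hcont.intervalIntegrable 0 1)
    simpa using this
  have hbound : ∫ t in (0:ℝ)..1, (inner ℝ (gradient F (x + t • c)) c : ℝ)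
      ≤ ∫ t in (0:ℝ)..1, ((inner ℝ (gradient F x) c : ℝ) + L * ‖c‖ ^ 2 * t) := by
    apply intervalIntegral.integral_mono_on (by norm_num)
      (hcont.intervalIntegrable 0 1)
      ((by continuity : Continuous fun t : ℝ =>
        (inner ℝ (gradient F x) c : ℝ) + L * ‖c‖ ^ 2 * t).intervalIntegrable 0 1)
    intro t ht
    have h1 : (inner ℝ (gradient F (x + t • c)) c : ℝ) - (inner ℝ (gradient F x) c : ℝ)
        = (inner ℝ (gradient F (x + t • c) - gradient F x) c : ℝ) := by
      rw [inner_sub_left]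
    have h2 : (inner ℝ (gradient F (x + t • c) - gradient F x) c : ℝ)
        ≤ ‖gradient F (x + t • c) - gradient F x‖ * ‖c‖ := real_inner_le_norm _ _
    have h3 : ‖gradient F (x + t • c) - gradient F x‖ ≤ L * (t * ‖c‖) := by
      have := hFLip (x + t • c) x
      simpa [norm_smul, Real.norm_of_nonneg ht.1] using this
    have h4 : ‖gradient F (x + t • c) - gradient F x‖ * ‖c‖ ≤ L * (t * ‖c‖) * ‖c‖ := by
      exact mul_le_mul_of_nonneg_right h3 (norm_nonneg _)
    nlinarith [norm_nonneg c]
  have hval : ∫ t in (0:ℝ)..1, ((inner ℝ (gradient F x) c : ℝ) + L * ‖c‖ ^ 2 * t)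
      = (inner ℝ (gradient F x) c : ℝ) + L / 2 * ‖c‖ ^ 2 := by
    have hInt : IntervalIntegrable (fun t : ℝ => L * ‖c‖ ^ 2 * t) MeasureTheory.volume 0 1 :=
      Continuous.intervalIntegrable (by continuity) 0 1
    rw [intervalIntegral.integral_add intervalIntegrable_const hInt,
      intervalIntegral.integral_const_mul, integral_id]
    norm_num
    ring
  linarith [hftc ▸ hbound, hval]

set_option maxHeartbeats 1000000 in
theorem stmt_0 {n : ℕ}
    (F G : EuclideanSpace ℝ (Fin n) → ℝ) (L γ : ℝ) (hL : 0 < L) (hγ : 0 < γ)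
    (hF : Differentiable ℝ F)
    (hFLip : ∀ x y, ‖gradient F x - gradient F y‖ ≤ L * ‖x - y‖)
    (hG : Differentiable ℝ G)
    (hGsc : ConvexOn ℝ Set.univ (fun x => G x - γ / 2 * ‖x‖ ^ 2))
    (x₀ xh : EuclideanSpace ℝ (Fin n))
    (hgrad : gradient G x₀ = gradient F x₀)
    (hGle : G xh ≤ G x₀)
    (η : ℝ) (hη : η ∈ Set.Ioo (0 : ℝ) 1)
    (α : ℝ) (hα0 : 0 < α) (hα : α ≤ min 1 (γ * (1 - η) / L)) :
    F (x₀ + α • (xh - x₀)) ≤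
      F x₀ + η * α * (inner ℝ (gradient F x₀) (xh - x₀) : ℝ) := by
  set d := xh - x₀ with hd
  set I : ℝ := inner ℝ x₀ d with hI
  set K : ℝ := inner ℝ (gradient F x₀) d with hK
  have hxh : xh = x₀ + d := by simp [hd]
  -- pointwise expansion of the squared norm along the line
  have heq : ∀ t : ℝ, ‖x₀ + t • d‖ ^ 2 = ‖x₀‖ ^ 2 + 2 * I * t + ‖d‖ ^ 2 * t ^ 2 := by
    intro t
    have h1 : ‖x₀ + t • d‖ ^ 2 = (inner ℝ (x₀ + t • d) (x₀ + t • d) : ℝ) :=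
      (real_inner_self_eq_norm_sq _).symm
    rw [h1]
    simp only [inner_add_add_self, real_inner_smul_left, real_inner_smul_right,
      real_inner_self_eq_norm_sq]
    rw [hI, norm_smul, mul_pow, Real.norm_eq_abs, sq_abs, real_inner_comm d x₀]
    ring
  -- the polynomial version of the composite function
  set φ : ℝ → ℝ := fun t => G (x₀ + t • d) - γ / 2 * (‖x₀‖ ^ 2 + 2 * I * t + ‖d‖ ^ 2 * t ^ 2)
    with hφ
  have hconv : ConvexOn ℝ Set.univ φ := by
    have h0 := hGsc.comp_affineMap (AffineMap.lineMap x₀ xh)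
    have hfun : ((fun x => G x - γ / 2 * ‖x‖ ^ 2) ∘ (AffineMap.lineMap x₀ xh)) = φ := by
      funext t
      have hl : (AffineMap.lineMap x₀ xh) t = x₀ + t • d := by
        simp [AffineMap.lineMap_apply, hd]; module
      simp only [Function.comp_apply, hl, hφ, heq t]
    rw [hfun] at h0
    simpa using h0
  have hφG : HasDerivAt (fun t : ℝ => G (x₀ + t • d)) (inner ℝ (gradient G x₀) d : ℝ) 0 := by
    simpa using line_hasDerivAt G hG x₀ d 0
  have hP : HasDerivAt (fun t : ℝ => γ / 2 * (‖x₀‖ ^ 2 + 2 * I * t + ‖d‖ ^ 2 * t ^ 2))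
      (γ / 2 * (2 * I)) 0 := by
    have h1 : HasDerivAt (fun t : ℝ => ‖x₀‖ ^ 2 + 2 * I * t + ‖d‖ ^ 2 * t ^ 2) (2 * I) 0 := by
      have := (((hasDerivAt_id (0:ℝ)).const_mul (2 * I)).const_add (‖x₀‖ ^ 2)).add
        ((hasDerivAt_pow 2 (0:ℝ)).const_mul (‖d‖ ^ 2))
      have h4 : HasDerivAt (fun t : ℝ => ‖x₀‖ ^ 2 + 2 * I * t + ‖d‖ ^ 2 * t ^ 2) _ 0 := this
      simpa using h4
    simpa using h1.const_mul (γ / 2)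
  have hφd : HasDerivAt φ ((inner ℝ (gradient G x₀) d : ℝ) - γ / 2 * (2 * I)) 0 := hφG.sub hP
  have hslope := hconv.le_slope_of_hasDerivAt (Set.mem_univ (0:ℝ)) (Set.mem_univ (1:ℝ))
    one_pos hφd
  have hsl : slope φ 0 1 = φ 1 - φ 0 := by simp [slope_def_field]
  have hφ1 : φ 1 = G xh - γ / 2 * (‖x₀‖ ^ 2 + 2 * I + ‖d‖ ^ 2) := by
    simp [hφ, ← hxh]
  have hφ0 : φ 0 = G x₀ - γ / 2 * ‖x₀‖ ^ 2 := by simp [hφ]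
  have hKle : K ≤ -(γ / 2) * ‖d‖ ^ 2 := by
    rw [hsl, hφ1, hφ0] at hslope
    have : (inner ℝ (gradient G x₀) d : ℝ) = K := by rw [hK, hgrad]
    rw [this] at hslope
    nlinarith [hslope, hGle]
  -- descent lemma
  have hdesc := descent_lemma F L hL.le hF hFLip x₀ (α • d)
  have hinner : (inner ℝ (gradient F x₀) (α • d) : ℝ) = α * K := by
    rw [real_inner_smul_right, hK]
  have hnorm : ‖α • d‖ ^ 2 = α ^ 2 * ‖d‖ ^ 2 := by
    rw [norm_smul, Real.norm_of_nonneg hα0.le]; ring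
  rw [hinner, hnorm] at hdesc
  -- arithmetic
  obtain ⟨hη0, hη1⟩ := hη
  have hα2 := (le_min_iff.mp hα).2
  have hLα : L * α ≤ γ * (1 - η) := by
    rw [le_div_iff₀ hL] at hα2; linarith
  have hd2 : (0:ℝ) ≤ ‖d‖ ^ 2 := sq_nonneg _
  have h1 : (1 - η) * α * K ≤ (1 - η) * α * (-(γ / 2) * ‖d‖ ^ 2) := by
    apply mul_le_mul_of_nonneg_left hKle
    nlinarith
  have h2 : (L * α) * (α * ‖d‖ ^ 2) ≤ (γ * (1 - η)) * (α * ‖d‖ ^ 2) :=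
    mul_le_mul_of_nonneg_right hLα (mul_nonneg hα0.le hd2)
  calc F (x₀ + α • d) ≤ F x₀ + α * K + L / 2 * (α ^ 2 * ‖d‖ ^ 2) := hdesc
    _ ≤ F x₀ + η * α * K := by nlinarith [h1, h2]
end

section
/- Let F : ℝⁿ → ℝ be differentiable with L-Lipschitz continuous gradient (L > 0), let G : ℝⁿ → ℝ be differentiable and γ-strongly convex (γ > 0), and let x₀, x̂ ∈ ℝⁿ satisfy ∇G(x₀) = ∇F(x₀) and G(x̂) ≤ G(x₀). Then for every η ∈ (0,1) and δ ∈ (0,1) there exists a nonnegative integer j such that α = δʲ satisfies both the Armijo condition F(x₀ + α(x̂ − x₀)) ≤ F(x₀) + η α ⟨∇F(x₀), x̂ − x₀⟩ and the lower bound α ≥ min{1, δγ(1−η)/L}. -/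
open InnerProductSpace

private lemma curve_hasDerivAt_aux {n : ℕ} (f : EuclideanSpace ℝ (Fin n) → ℝ)
    (hf : Differentiable ℝ f) (x₀ d : EuclideanSpace ℝ (Fin n)) (t : ℝ) :
    HasDerivAt (fun t : ℝ => f (x₀ + t • d)) (inner ℝ (gradient f (x₀ + t • d)) d : ℝ) t := by
  have hc : HasDerivAt (fun t : ℝ => x₀ + t • d) d t := by
    simpa using (hasDerivAt_id t).smul_const d |>.const_add x₀
  have hg := (hf (x₀ + t • d)).hasGradientAt
  rw [hasGradientAt_iff_hasFDerivAt] at hg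
  have := hg.comp_hasDerivAt t hc
  simp only [toDual_apply_apply] at this
  exact this

private lemma strong_key_aux {n : ℕ} (G : EuclideanSpace ℝ (Fin n) → ℝ) (γ : ℝ)
    (hG : Differentiable ℝ G)
    (hGsc : ConvexOn ℝ Set.univ (fun x => G x - γ / 2 * ‖x‖ ^ 2))
    (x₀ xh : EuclideanSpace ℝ (Fin n)) :
    (inner ℝ (gradient G x₀) (xh - x₀) : ℝ) ≤
      G xh - G x₀ - γ / 2 * ‖xh - x₀‖ ^ 2 := by
  set d := xh - x₀ with hd
  set ψ : ℝ → ℝ := fun t => G (x₀ + t • d) - γ / 2 * ‖x₀ + t • d‖ ^ 2 with hψ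
  have heq : ∀ t : ℝ, (AffineMap.lineMap x₀ (x₀ + d)) t = x₀ + t • d := by
    intro t; simp [AffineMap.lineMap_apply, add_comm]
  have hψconv : ConvexOn ℝ Set.univ ψ := by
    have h := hGsc.comp_affineMap (AffineMap.lineMap x₀ (x₀ + d))
    rw [Set.preimage_univ] at h
    have hfun : ψ = (fun x => G x - γ / 2 * ‖x‖ ^ 2) ∘ (AffineMap.lineMap x₀ (x₀ + d)) := by
      funext t; simp [hψ, Function.comp, heq t]
    rw [hfun]; exact h
  have hq : HasDerivAt (fun t : ℝ => ‖x₀ + t • d‖ ^ 2)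
      (2 * (inner ℝ x₀ d : ℝ) + 2 * 0 * ‖d‖ ^ 2) 0 := by
    have hfun : (fun t : ℝ => ‖x₀ + t • d‖ ^ 2) =
        fun t : ℝ => ‖x₀‖ ^ 2 + 2 * t * (inner ℝ x₀ d : ℝ) + t ^ 2 * ‖d‖ ^ 2 := by
      funext t
      rw [@norm_add_sq_real, real_inner_smul_right, norm_smul]
      simp [mul_pow, sq_abs]; ring
    rw [hfun]
    have h1 : HasDerivAt (fun t : ℝ => ‖x₀‖ ^ 2 + 2 * t * (inner ℝ x₀ d : ℝ))
        (2 * (inner ℝ x₀ d : ℝ)) 0 := by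
      simpa [mul_comm, mul_assoc] using
        (((hasDerivAt_id (0:ℝ)).const_mul 2).mul_const (inner ℝ x₀ d : ℝ)).const_add (‖x₀‖ ^ 2)
    have h2 : HasDerivAt (fun t : ℝ => t ^ 2 * ‖d‖ ^ 2) (2 * 0 * ‖d‖ ^ 2) 0 := by
      simpa using ((hasDerivAt_pow 2 (0:ℝ)).mul_const (‖d‖ ^ 2))
    exact h1.add h2
  have hψ0 : HasDerivAt ψ ((inner ℝ (gradient G x₀) d : ℝ) - γ * (inner ℝ x₀ d : ℝ)) 0 := by
    have hG0 := curve_hasDerivAt_aux G hG x₀ d 0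
    simp only [zero_smul, add_zero] at hG0
    have h2 := hG0.sub (hq.const_mul (γ / 2))
    have hval : (inner ℝ (gradient G x₀) d : ℝ) - γ / 2 * (2 * (inner ℝ x₀ d : ℝ) + 2 * 0 * ‖d‖ ^ 2)
        = (inner ℝ (gradient G x₀) d : ℝ) - γ * (inner ℝ x₀ d : ℝ) := by ring
    rw [hval] at h2
    exact h2
  have hslope := hψconv.le_slope_of_hasDerivAt (Set.mem_univ (0:ℝ)) (Set.mem_univ (1:ℝ))
      one_pos hψ0
  rw [slope_def_field] at hslope
  rw [show (1:ℝ) - 0 = 1 by norm_num, div_one] at hslope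
  have hψ1 : ψ 1 = G xh - γ / 2 * ‖xh‖ ^ 2 := by simp [hψ, hd]
  have hψz : ψ 0 = G x₀ - γ / 2 * ‖x₀‖ ^ 2 := by simp [hψ]
  have hnorm : ‖xh - x₀‖ ^ 2 = ‖xh‖ ^ 2 - 2 * (inner ℝ x₀ xh : ℝ) + ‖x₀‖ ^ 2 := by
    rw [@norm_sub_sq_real, real_inner_comm x₀ xh]
  have hinner : (inner ℝ x₀ d : ℝ) = (inner ℝ x₀ xh : ℝ) - ‖x₀‖ ^ 2 := by
    rw [hd, inner_sub_right, real_inner_self_eq_norm_sq]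
  rw [hψ1, hψz] at hslope
  rw [← hd] at hnorm
  have h3 : γ * (inner ℝ x₀ d : ℝ) = γ * (inner ℝ x₀ xh : ℝ) - γ * ‖x₀‖ ^ 2 := by
    rw [hinner]; ring
  have h4 : γ / 2 * ‖d‖ ^ 2 = γ / 2 * ‖xh‖ ^ 2 - γ * (inner ℝ x₀ xh : ℝ) + γ / 2 * ‖x₀‖ ^ 2 := by
    rw [hnorm]; ring
  linarith

private lemma descent_aux {n : ℕ} (F : EuclideanSpace ℝ (Fin n) → ℝ) (L : ℝ)
    (hF : Differentiable ℝ F)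
    (hFLip : ∀ x y, ‖gradient F x - gradient F y‖ ≤ L * ‖x - y‖)
    (x₀ d : EuclideanSpace ℝ (Fin n)) (α : ℝ) (hα : 0 ≤ α) :
    F (x₀ + α • d) ≤ F x₀ + α * (inner ℝ (gradient F x₀) d : ℝ)
      + L / 2 * α ^ 2 * ‖d‖ ^ 2 := by
  rcases eq_or_lt_of_le hα with h0 | hαpos
  · simp [← h0]
  set A : ℝ := (inner ℝ (gradient F x₀) d : ℝ) with hA
  set χ : ℝ → ℝ := fun t => F (x₀ + t • d) - t * A - L / 2 * t ^ 2 * ‖d‖ ^ 2 with hχ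
  have hderiv : ∀ t : ℝ, HasDerivAt χ
      ((inner ℝ (gradient F (x₀ + t • d)) d : ℝ) - A - L * t * ‖d‖ ^ 2) t := by
    intro t
    have h1 := curve_hasDerivAt_aux F hF x₀ d t
    have h2 : HasDerivAt (fun t : ℝ => t * A) A t := by
      simpa using (hasDerivAt_id t).mul_const A
    have h3 : HasDerivAt (fun t : ℝ => L / 2 * t ^ 2 * ‖d‖ ^ 2) (L * t * ‖d‖ ^ 2) t := by
      have := ((hasDerivAt_pow 2 t).const_mul (L / 2)).mul_const (‖d‖ ^ 2)
      refine this.congr_deriv ?_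
      push_cast
      ring
    exact (h1.sub h2).sub h3
  have hkey : ∀ t ∈ Set.Ioo (0:ℝ) α,
      (inner ℝ (gradient F (x₀ + t • d)) d : ℝ) - A - L * t * ‖d‖ ^ 2 ≤ 0 := by
    intro t ht
    have h1 : (inner ℝ (gradient F (x₀ + t • d)) d : ℝ) - A
        = (inner ℝ (gradient F (x₀ + t • d) - gradient F x₀) d : ℝ) := by
      rw [inner_sub_left]
    have h2 : (inner ℝ (gradient F (x₀ + t • d) - gradient F x₀) d : ℝ)
        ≤ ‖gradient F (x₀ + t • d) - gradient F x₀‖ * ‖d‖ := real_inner_le_norm _ _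
    have h3 : ‖gradient F (x₀ + t • d) - gradient F x₀‖ ≤ L * ‖t • d‖ := by
      simpa using hFLip (x₀ + t • d) x₀
    have h4 : ‖t • d‖ = t * ‖d‖ := by
      rw [norm_smul, Real.norm_eq_abs, abs_of_pos ht.1]
    have h5 : ‖gradient F (x₀ + t • d) - gradient F x₀‖ * ‖d‖ ≤ L * (t * ‖d‖) * ‖d‖ := by
      rw [← h4]
      exact mul_le_mul_of_nonneg_right h3 (norm_nonneg d)
    have h6 : L * (t * ‖d‖) * ‖d‖ = L * t * ‖d‖ ^ 2 := by ring
    linarith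
  have hanti : AntitoneOn χ (Set.Icc 0 α) := by
    apply antitoneOn_of_deriv_nonpos (convex_Icc 0 α)
    · intro t _
      exact (hderiv t).differentiableAt.continuousAt.continuousWithinAt
    · intro t ht
      exact (hderiv t).differentiableAt.differentiableWithinAt
    · intro t ht
      rw [interior_Icc] at ht
      rw [(hderiv t).deriv]
      exact hkey t ht
  have := hanti (Set.left_mem_Icc.2 hα) (Set.right_mem_Icc.2 hα) hα
  simp only [hχ] at this
  simp only [zero_smul, add_zero, zero_mul, zero_pow, mul_zero, sub_zero] at this
  linarith [this]

theorem stmt_1 {n : ℕ}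
    (F G : EuclideanSpace ℝ (Fin n) → ℝ) (L γ : ℝ) (hL : 0 < L) (hγ : 0 < γ)
    (hF : Differentiable ℝ F)
    (hFLip : ∀ x y, ‖gradient F x - gradient F y‖ ≤ L * ‖x - y‖)
    (hG : Differentiable ℝ G)
    (hGsc : ConvexOn ℝ Set.univ (fun x => G x - γ / 2 * ‖x‖ ^ 2))
    (x₀ xh : EuclideanSpace ℝ (Fin n))
    (hgrad : gradient G x₀ = gradient F x₀)
    (hGle : G xh ≤ G x₀)
    (η δ : ℝ) (hη : η ∈ Set.Ioo (0 : ℝ) 1) (hδ : δ ∈ Set.Ioo (0 : ℝ) 1) :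
    ∃ j : ℕ,
      F (x₀ + δ ^ j • (xh - x₀)) ≤
        F x₀ + η * δ ^ j * (inner ℝ (gradient F x₀) (xh - x₀) : ℝ) ∧
      min 1 (δ * γ * (1 - η) / L) ≤ δ ^ j := by
  obtain ⟨hη0, hη1⟩ := hη
  obtain ⟨hδ0, hδ1⟩ := hδ
  set d := xh - x₀ with hd
  set A : ℝ := (inner ℝ (gradient F x₀) d : ℝ) with hA
  have hAle : A ≤ -(γ / 2) * ‖d‖ ^ 2 := by
    have h := strong_key_aux G γ hG hGsc x₀ xh
    rw [hgrad] at h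
    rw [hA, hd]
    linarith [h, hGle]
  set c : ℝ := γ * (1 - η) / L with hc
  have hcpos : 0 < c := by
    apply div_pos (mul_pos hγ (by linarith)) hL
  -- Armijo condition holds for any step size α ∈ (0, c]
  have harm : ∀ α : ℝ, 0 < α → α ≤ c → F (x₀ + α • d) ≤ F x₀ + η * α * A := by
    intro α hαpos hαc
    have hdesc := descent_aux F L hF hFLip x₀ d α hαpos.le
    have k2 : L * α ≤ γ * (1 - η) := by
      have := mul_le_mul_of_nonneg_left hαc hL.le
      rw [hc] at this
      rw [mul_div_cancel₀ _ (ne_of_gt hL)] at this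
      linarith
    have k1 : (1 - η) * α * A ≤ (1 - η) * α * (-(γ / 2) * ‖d‖ ^ 2) :=
      mul_le_mul_of_nonneg_left hAle (mul_nonneg (by linarith) hαpos.le)
    have k3 : L * α * (α * ‖d‖ ^ 2) ≤ γ * (1 - η) * (α * ‖d‖ ^ 2) :=
      mul_le_mul_of_nonneg_right k2 (by positivity)
    have e1 : α * A - η * α * A = (1 - η) * α * A := by ring
    have e2 : L / 2 * α ^ 2 * ‖d‖ ^ 2 = (L * α * (α * ‖d‖ ^ 2)) / 2 := by ring
    have e3 : (1 - η) * α * (-(γ / 2) * ‖d‖ ^ 2) = -(γ * (1 - η) * (α * ‖d‖ ^ 2)) / 2 := by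
      ring
    linarith [hdesc, k1, k3]
  rcases le_or_gt 1 c with hcase | hcase
  · -- c ≥ 1 : take j = 0
    refine ⟨0, ?_, ?_⟩
    · have := harm 1 one_pos hcase
      simpa using this
    · simp
  · -- c < 1 : take the first j with δ^j ≤ c
    have hex : ∃ m : ℕ, δ ^ m ≤ c := by
      obtain ⟨m, hm⟩ := exists_pow_lt_of_lt_one hcpos hδ1
      exact ⟨m, hm.le⟩
    set j := Nat.find hex with hj
    have hjle : δ ^ j ≤ c := Nat.find_spec hex
    have hjpos : 0 < j := by
      rcases Nat.eq_zero_or_pos j with h0 | h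
      · exfalso
        have := hjle
        rw [h0] at this
        simp at this
        linarith
      · exact h
    have hprev : c < δ ^ (j - 1) := by
      have := Nat.find_min hex (Nat.sub_lt hjpos one_pos)
      push_neg at this
      exact this
    have hpow : δ ^ j = δ ^ (j - 1) * δ := by
      rw [← pow_succ]
      congr 1
      omega
    refine ⟨j, harm (δ ^ j) (pow_pos hδ0 j) hjle, ?_⟩
    have h1 : δ * γ * (1 - η) / L = c * δ := by rw [hc]; ring
    have h2 : c * δ ≤ δ ^ (j - 1) * δ := mul_le_mul_of_nonneg_right hprev.le hδ0.le
    calc min 1 (δ * γ * (1 - η) / L) ≤ δ * γ * (1 - η) / L := min_le_right _ _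
      _ = c * δ := h1
      _ ≤ δ ^ (j - 1) * δ := h2
      _ = δ ^ j := hpow.symm
end

section
/- Let F : ℝⁿ → ℝ be differentiable at x₀, let G : ℝⁿ → ℝ be differentiable and γ-strongly convex (γ > 0), and suppose ∇G(x₀) = ∇F(x₀) and G(x̂) ≤ G(x₀) for some x̂ ∈ ℝⁿ. Then ⟨∇F(x₀), x̂ − x₀⟩ ≤ G(x̂) − G(x₀) − (γ/2)‖x̂ − x₀‖² ≤ −(γ/2)‖x̂ − x₀‖²; in particular, x̂ − x₀ is a descent direction for F at x₀ whenever x̂ ≠ x₀. -/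
theorem stmt_2 {n : ℕ}
    (F G : EuclideanSpace ℝ (Fin n) → ℝ) (γ : ℝ) (hγ : 0 < γ)
    (x₀ xh : EuclideanSpace ℝ (Fin n))
    (hF : DifferentiableAt ℝ F x₀)
    (hG : Differentiable ℝ G)
    (hGsc : ConvexOn ℝ Set.univ (fun x => G x - γ / 2 * ‖x‖ ^ 2))
    (hgrad : gradient G x₀ = gradient F x₀)
    (hGle : G xh ≤ G x₀) :
    (inner ℝ (gradient F x₀) (xh - x₀) : ℝ) ≤ G xh - G x₀ - γ / 2 * ‖xh - x₀‖ ^ 2 ∧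
    G xh - G x₀ - γ / 2 * ‖xh - x₀‖ ^ 2 ≤ -(γ / 2) * ‖xh - x₀‖ ^ 2 ∧
    (xh ≠ x₀ → (inner ℝ (gradient F x₀) (xh - x₀) : ℝ) < 0) := by
  set v : EuclideanSpace ℝ (Fin n) := xh - x₀ with hv
  set φ : ℝ → ℝ := fun t => G (x₀ + t • v) - γ / 2 * ‖x₀ + t • v‖ ^ 2 with hφ
  have hxv : x₀ + v = xh := by rw [hv]; abel
  have h0 : x₀ + (0 : ℝ) • v = x₀ := by simp
  -- φ is convex
  have hline : ∀ t : ℝ, (AffineMap.lineMap x₀ xh : ℝ →ᵃ[ℝ] _) t = x₀ + t • v := by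
    intro t
    rw [AffineMap.lineMap_apply, hv, vsub_eq_sub, vadd_eq_add, add_comm]
  have hφconv : ConvexOn ℝ Set.univ φ := by
    have h1 := hGsc.comp_affineMap (AffineMap.lineMap x₀ xh : ℝ →ᵃ[ℝ] _)
    have h2 : ((fun x => G x - γ / 2 * ‖x‖ ^ 2) ∘
        (AffineMap.lineMap x₀ xh : ℝ →ᵃ[ℝ] _)) = φ := by
      funext t
      simp [Function.comp, hline t, hφ]
    rw [h2, Set.preimage_univ] at h1
    exact h1
  -- derivative of φ at 0
  have hcd : HasDerivAt (fun t : ℝ => x₀ + t • v) v 0 := by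
    simpa using ((hasDerivAt_id (0 : ℝ)).smul_const v).const_add x₀
  have hGd : HasDerivAt (fun t : ℝ => G (x₀ + t • v)) ((fderiv ℝ G x₀) v) 0 := by
    have := (hG (x₀ + (0 : ℝ) • v)).hasFDerivAt.comp_hasDerivAt 0 hcd
    rwa [h0] at this
  have hNd : HasDerivAt (fun t : ℝ => ‖x₀ + t • v‖ ^ 2)
      (2 * (inner ℝ x₀ v : ℝ)) 0 := by
    have := hcd.norm_sq
    rwa [h0] at this
  have hφd : HasDerivAt φ ((fderiv ℝ G x₀) v - γ / 2 * (2 * (inner ℝ x₀ v : ℝ))) 0 :=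
    hGd.sub (hNd.const_mul (γ / 2))
  -- gradient inequality
  have hslope := hφconv.le_slope_of_hasDerivAt (Set.mem_univ (0 : ℝ))
    (Set.mem_univ (1 : ℝ)) one_pos hφd
  have hslope1 : slope φ 0 1 = φ 1 - φ 0 := by simp [slope]
  rw [hslope1] at hslope
  have hφ1 : φ 1 = G xh - γ / 2 * ‖xh‖ ^ 2 := by simp [hφ, hxv]
  have hφ0 : φ 0 = G x₀ - γ / 2 * ‖x₀‖ ^ 2 := by simp [hφ]
  -- fderiv applied to v equals inner of gradient
  have hgradG : (fderiv ℝ G x₀) v = (inner ℝ (gradient G x₀) v : ℝ) := by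
    have h := (hG x₀).hasGradientAt
    rw [hasGradientAt_iff_hasFDerivAt] at h
    rw [h.fderiv]
    exact InnerProductSpace.toDual_apply_apply
  have hnorm : ‖xh‖ ^ 2 = ‖x₀‖ ^ 2 + 2 * (inner ℝ x₀ v : ℝ) + ‖v‖ ^ 2 := by
    rw [← hxv]; exact norm_add_sq_real x₀ v
  have key : (inner ℝ (gradient F x₀) v : ℝ) ≤ G xh - G x₀ - γ / 2 * ‖v‖ ^ 2 := by
    rw [← hgrad, ← hgradG]
    rw [hφ1, hφ0, hnorm] at hslope
    nlinarith [hslope]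
  refine ⟨key, by nlinarith, fun hne => ?_⟩
  have hvne : v ≠ 0 := sub_ne_zero_of_ne hne
  have : 0 < ‖v‖ ^ 2 := pow_pos (norm_pos_iff.mpr hvne) 2
  nlinarith [key]
end

section
/- Let F : ℝⁿ → ℝ be differentiable at x₀, let G : ℝⁿ → ℝ be differentiable and γ-strongly convex (γ > 0), and suppose ∇G(x₀) = ∇F(x₀) and G(x̂) ≤ G(x₀) for some x̂ ∈ ℝⁿ. If for some η ∈ (0,1) and α > 0 the Armijo condition F(x₀ + α(x̂ − x₀)) ≤ F(x₀) + η α ⟨∇F(x₀), x̂ − x₀⟩ holds, then F(x₀ + α(x̂ − x₀)) ≤ F(x₀) − η α (γ/2) ‖x̂ − x₀‖². -/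
theorem stmt_3 {n : ℕ}
    (F G : EuclideanSpace ℝ (Fin n) → ℝ) (γ : ℝ) (hγ : 0 < γ)
    (x₀ xh : EuclideanSpace ℝ (Fin n))
    (hF : DifferentiableAt ℝ F x₀)
    (hG : Differentiable ℝ G)
    (hGsc : ConvexOn ℝ Set.univ (fun x => G x - γ / 2 * ‖x‖ ^ 2))
    (hgrad : gradient G x₀ = gradient F x₀)
    (hGle : G xh ≤ G x₀)
    (η α : ℝ) (hη : η ∈ Set.Ioo (0 : ℝ) 1) (hα : 0 < α)
    (harmijo : F (x₀ + α • (xh - x₀)) ≤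
      F x₀ + η * α * (inner ℝ (gradient F x₀) (xh - x₀) : ℝ)) :
    F (x₀ + α • (xh - x₀)) ≤ F x₀ - η * α * (γ / 2) * ‖xh - x₀‖ ^ 2 := by
  obtain ⟨hη0, hη1⟩ := hη
  set v : EuclideanSpace ℝ (Fin n) := xh - x₀ with hv
  -- line map derivative
  have hline : HasDerivAt (fun t : ℝ => x₀ + t • v) v 0 := by
    simpa using ((hasDerivAt_id (0:ℝ)).smul_const v).const_add x₀
  have hx00 : x₀ + (0:ℝ) • v = x₀ := by simp
  -- derivative of G along the line
  have hGfd : HasFDerivAt G ((InnerProductSpace.toDual ℝ _) (gradient G x₀)) x₀ :=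
    hasGradientAt_iff_hasFDerivAt.mp (hG x₀).hasGradientAt
  have hGd : HasDerivAt (fun t : ℝ => G (x₀ + t • v))
      ((inner ℝ (gradient G x₀) v : ℝ)) 0 := by
    have hGfd' : HasFDerivAt G ((InnerProductSpace.toDual ℝ _) (gradient G x₀))
        ((fun t : ℝ => x₀ + t • v) 0) := by rw [show (fun t : ℝ => x₀ + t • v) 0 = x₀ by simp]; exact hGfd
    have h := hGfd'.comp_hasDerivAt (0:ℝ) hline
    simp only [Function.comp_def, InnerProductSpace.toDual_apply_apply] at h
    exact h
  -- derivative of the norm-squared term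
  have hnd : HasDerivAt (fun t : ℝ => ‖x₀ + t • v‖ ^ 2)
      (2 * (inner ℝ x₀ v : ℝ)) 0 := by
    have h1 : HasDerivAt (fun t : ℝ => (inner ℝ (x₀ + t • v) (x₀ + t • v) : ℝ))
        ((inner ℝ (x₀ + (0:ℝ) • v) v : ℝ) + (inner ℝ v (x₀ + (0:ℝ) • v) : ℝ)) 0 :=
      hline.inner ℝ hline
    have h2 : ((inner ℝ (x₀ + (0:ℝ) • v) v : ℝ) + (inner ℝ v (x₀ + (0:ℝ) • v) : ℝ))
        = 2 * (inner ℝ x₀ v : ℝ) := by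
      rw [hx00, real_inner_comm v x₀]; ring
    rw [h2] at h1
    convert h1 using 2 with t
    rw [← real_inner_self_eq_norm_sq]
  -- φ is convex
  have hφconv : ConvexOn ℝ Set.univ
      (fun t : ℝ => G (x₀ + t • v) - γ / 2 * ‖x₀ + t • v‖ ^ 2) := by
    have := hGsc.comp_affineMap (AffineMap.lineMap x₀ xh)
    have heq : ((fun x => G x - γ / 2 * ‖x‖ ^ 2) ∘ ⇑(AffineMap.lineMap x₀ xh))
        = fun t : ℝ => G (x₀ + t • v) - γ / 2 * ‖x₀ + t • v‖ ^ 2 := by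
      funext t
      simp only [Function.comp, AffineMap.lineMap_apply, vsub_eq_sub, vadd_eq_add, hv]
      rw [add_comm]
    simpa [heq] using this
  -- derivative of φ at 0
  have hφd : HasDerivAt (fun t : ℝ => G (x₀ + t • v) - γ / 2 * ‖x₀ + t • v‖ ^ 2)
      ((inner ℝ (gradient G x₀) v : ℝ) - γ / 2 * (2 * (inner ℝ x₀ v : ℝ))) 0 :=
    hGd.sub (hnd.const_mul (γ / 2))
  -- first-order convexity inequality
  have hkey := hφconv.le_slope_of_hasDerivAt (Set.mem_univ (0:ℝ)) (Set.mem_univ (1:ℝ))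
      one_pos hφd
  have hx1 : x₀ + (1:ℝ) • v = xh := by simp [hv]
  rw [slope_def_field] at hkey
  rw [hx00, hx1] at hkey
  have hslope : ((G xh - γ / 2 * ‖xh‖ ^ 2) - (G x₀ - γ / 2 * ‖x₀‖ ^ 2)) / (1 - 0)
      = (G xh - γ / 2 * ‖xh‖ ^ 2) - (G x₀ - γ / 2 * ‖x₀‖ ^ 2) := by ring
  -- expand ‖xh‖² = ‖x₀ + v‖²
  have hxh : xh = x₀ + v := by simp [hv]
  have hnorm : ‖xh‖ ^ 2 = ‖x₀‖ ^ 2 + 2 * (inner ℝ x₀ v : ℝ) + ‖v‖ ^ 2 := by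
    rw [hxh, norm_add_sq_real]
  have hGineq : (inner ℝ (gradient G x₀) v : ℝ) + γ / 2 * ‖v‖ ^ 2 ≤ G xh - G x₀ := by
    rw [show (1:ℝ) - 0 = 1 by norm_num, div_one] at hkey
    nlinarith [hkey, hnorm]
  have hFiner : (inner ℝ (gradient F x₀) v : ℝ) ≤ - (γ / 2) * ‖v‖ ^ 2 := by
    rw [← hgrad]; nlinarith
  have hmul : η * α * (inner ℝ (gradient F x₀) v : ℝ) ≤
      η * α * (- (γ / 2) * ‖v‖ ^ 2) := by
    apply mul_le_mul_of_nonneg_left hFiner (by positivity)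
  calc F (x₀ + α • v) ≤ F x₀ + η * α * (inner ℝ (gradient F x₀) v : ℝ) := harmijo
    _ ≤ F x₀ + η * α * (- (γ / 2) * ‖v‖ ^ 2) := by linarith
    _ = F x₀ - η * α * (γ / 2) * ‖v‖ ^ 2 := by ring
end

section
/- Under the ACQUIRE hypotheses, the sequence {x⁽ᵏ⁾} is bounded and has a subsequence converging to a point x̄ ∈ S that minimizes F over S; moreover, every limit point of {x⁽ᵏ⁾} belongs to S and minimizes F over S. -/
open Filter Topology InnerProductSpace

variable {E : Type*} [NormedAddCommGroup E] [InnerProductSpace ℝ E] [CompleteSpace E]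

lemma dirDeriv (f : E → ℝ) (hf : Differentiable ℝ f) (p v : E) (t₀ : ℝ) :
    HasDerivAt (fun t : ℝ => f (p + t • v)) (inner ℝ (gradient f (p + t₀ • v)) v : ℝ) t₀ := by
  have hline : HasDerivAt (fun t : ℝ => p + t • v) v t₀ := by
    simpa using ((hasDerivAt_id t₀).smul_const v).const_add p
  have hF := (hf (p + t₀ • v)).hasGradientAt.hasFDerivAt
  have := hF.comp_hasDerivAt t₀ hline
  simp [toDual_apply_apply] at this ⊢
  exact this

lemma slopeTendsto (f : E → ℝ) (hf : Differentiable ℝ f) (p v : E) :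
    Tendsto (fun t : ℝ => (f (p + t • v) - f p) / t) (𝓝[>] 0)
      (𝓝 (inner ℝ (gradient f p) v : ℝ)) := by
  have h := dirDeriv f hf p v 0
  rw [hasDerivAt_iff_tendsto_slope] at h
  simp only [zero_smul, add_zero] at h
  have h2 : Tendsto (slope (fun t : ℝ => f (p + t • v)) 0) (𝓝[>] 0)
      (𝓝 (inner ℝ (gradient f p) v : ℝ)) :=
    h.mono_left (nhdsWithin_mono 0 (fun t ht => Set.mem_compl_singleton_iff.mpr (ne_of_gt ht)))
  refine h2.congr (fun t => ?_)
  simp [slope_def_field, div_eq_mul_inv, mul_comm]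

lemma comboEq (p q : E) (t : ℝ) : p + t • (q - p) = (1 - t) • p + t • q := by
  rw [smul_sub, sub_smul, one_smul]; abel

lemma normCombo (p q : E) (t : ℝ) :
    ‖(1 - t) • p + t • q‖ ^ 2
      = (1 - t) * ‖p‖ ^ 2 + t * ‖q‖ ^ 2 - t * (1 - t) * ‖p - q‖ ^ 2 := by
  have e1 := norm_add_sq_real ((1 - t) • p) (t • q)
  have e2 := norm_sub_sq_real p q
  have e3 : ‖(1 - t) • p‖ ^ 2 = (1 - t) ^ 2 * ‖p‖ ^ 2 := by
    rw [norm_smul]; simp [mul_pow, sq_abs]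
  have e4 : ‖t • q‖ ^ 2 = t ^ 2 * ‖q‖ ^ 2 := by
    rw [norm_smul]; simp [mul_pow, sq_abs]
  have e5 : ⟪(1 - t) • p, t • q⟫_ℝ = (1 - t) * t * ⟪p, q⟫_ℝ := by
    rw [real_inner_smul_left, real_inner_smul_right]; ring
  rw [e1, e3, e4, e5, e2]; ring

lemma gradIneq (f : E → ℝ) (hconv : ConvexOn ℝ Set.univ f) (hf : Differentiable ℝ f)
    (p q : E) : f p + (inner ℝ (gradient f p) (q - p) : ℝ) ≤ f q := by
  have hslope := slopeTendsto f hf p (q - p)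
  have hb : ∀ᶠ t in 𝓝[>] (0 : ℝ), (f (p + t • (q - p)) - f p) / t ≤ f q - f p := by
    filter_upwards [Ioo_mem_nhdsGT one_pos] with t ht
    have hc := hconv.2 (Set.mem_univ p) (Set.mem_univ q)
      (by linarith [ht.2] : (0:ℝ) ≤ 1 - t) ht.1.le (by ring)
    simp only [smul_eq_mul] at hc
    rw [div_le_iff₀ ht.1]
    calc f (p + t • (q - p)) - f p = f ((1 - t) • p + t • q) - f p := by rw [comboEq]
      _ ≤ (1 - t) * f p + t * f q - f p := by linarith [hc]
      _ = (f q - f p) * t := by ring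
  have := le_of_tendsto hslope hb
  linarith

lemma strongGradIneq (f : E → ℝ) (γ : ℝ)
    (hconv : ConvexOn ℝ Set.univ (fun z => f z - γ / 2 * ‖z‖ ^ 2))
    (hf : Differentiable ℝ f) (p q : E) :
    f p + (inner ℝ (gradient f p) (q - p) : ℝ) + γ / 2 * ‖q - p‖ ^ 2 ≤ f q := by
  have hslope := slopeTendsto f hf p (q - p)
  have hrhs : Tendsto (fun t : ℝ => f q - f p - γ / 2 * (1 - t) * ‖p - q‖ ^ 2) (𝓝[>] 0)
      (𝓝 (f q - f p - γ / 2 * ‖p - q‖ ^ 2)) := by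
    have hc : Continuous (fun t : ℝ => f q - f p - γ / 2 * (1 - t) * ‖p - q‖ ^ 2) := by
      continuity
    have := (hc.tendsto 0).mono_left (nhdsWithin_le_nhds (s := Set.Ioi (0:ℝ)))
    simpa using this
  have hb : ∀ᶠ t in 𝓝[>] (0 : ℝ), (f (p + t • (q - p)) - f p) / t
      ≤ f q - f p - γ / 2 * (1 - t) * ‖p - q‖ ^ 2 := by
    filter_upwards [Ioo_mem_nhdsGT one_pos] with t ht
    have hc := hconv.2 (Set.mem_univ p) (Set.mem_univ q)
      (by linarith [ht.2] : (0:ℝ) ≤ 1 - t) ht.1.le (by ring)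
    simp only [smul_eq_mul] at hc
    have hn := normCombo p q t
    rw [hn] at hc
    rw [div_le_iff₀ ht.1, comboEq]
    nlinarith [hc]
  have := le_of_tendsto_of_tendsto hslope hrhs hb
  have hpq : ‖p - q‖ = ‖q - p‖ := norm_sub_rev p q
  rw [hpq] at this
  linarith

lemma varIneq (f : E → ℝ) (hf : Differentiable ℝ f) {S : Set E} (hSconv : Convex ℝ S)
    {p : E} (hp : p ∈ S) (hmin : ∀ z ∈ S, f p ≤ f z) {q : E} (hq : q ∈ S) :
    0 ≤ (inner ℝ (gradient f p) (q - p) : ℝ) := by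
  refine ge_of_tendsto (slopeTendsto f hf p (q - p)) ?_
  filter_upwards [Ioo_mem_nhdsGT one_pos] with t ht
  have hmem : p + t • (q - p) ∈ S := by
    rw [comboEq]
    exact hSconv hp hq (by linarith [ht.2]) ht.1.le (by ring)
  exact div_nonneg (sub_nonneg.mpr (hmin _ hmem)) ht.1.le

theorem stmt_5 {n : ℕ}
    (S : Set (EuclideanSpace ℝ (Fin n)))
    (hSne : S.Nonempty) (hScl : IsClosed S) (hSconv : Convex ℝ S)
    (F : EuclideanSpace ℝ (Fin n) → ℝ)
    (hFconv : ConvexOn ℝ Set.univ F)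
    (hFdiff : Differentiable ℝ F)
    (L : ℝ) (hL : 0 < L)
    (hFLip : ∀ u v, ‖gradient F u - gradient F v‖ ≤ L * ‖u - v‖)
    (hFcoer : Filter.Tendsto F (Filter.comap norm Filter.atTop) Filter.atTop)
    (γ η alphaBar M : ℝ) (hγ : 0 < γ) (hη : η ∈ Set.Ioo (0 : ℝ) 1)
    (halphaBar : 0 < alphaBar) (hM : 0 < M)
    (Fk : ℕ → EuclideanSpace ℝ (Fin n) → ℝ)
    (x xb xh : ℕ → EuclideanSpace ℝ (Fin n))
    (ε α : ℕ → ℝ)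
    (hFkdiff : ∀ k, Differentiable ℝ (Fk k))
    (hFksc : ∀ k, ConvexOn ℝ Set.univ (fun z => Fk k z - γ / 2 * ‖z‖ ^ 2))
    (hFkLip : ∀ k u v, ‖gradient (Fk k) u - gradient (Fk k) v‖ ≤ M * ‖u - v‖)
    (hgradeq : ∀ k, gradient (Fk k) (x k) = gradient F (x k))
    (hxbS : ∀ k, xb k ∈ S)
    (hxbmin : ∀ k, ∀ z ∈ S, Fk k (xb k) ≤ Fk k z)
    (hxhS : ∀ k, xh k ∈ S)
    (hxherr : ∀ k, ‖xh k - xb k‖ ≤ ε k)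
    (hxhdec : ∀ k, Fk k (xh k) ≤ Fk k (x k))
    (hε : ∀ k, 0 < ε k)
    (hεlim : Filter.Tendsto ε Filter.atTop (nhds 0))
    (hα : ∀ k, α k ∈ Set.Icc alphaBar 1)
    (harmijo : ∀ k, F (x k + α k • (xh k - x k)) ≤
      F (x k) + η * α k * (inner ℝ (gradient F (x k)) (xh k - x k) : ℝ))
    (hupd : ∀ k, x (k + 1) = x k + α k • (xh k - x k))
    (hx0 : x 0 ∈ S) :
    Bornology.IsBounded (Set.range x) ∧
    (∃ (φ : ℕ → ℕ) (xbar : EuclideanSpace ℝ (Fin n)), StrictMono φ ∧ xbar ∈ S ∧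
      Filter.Tendsto (fun j => x (φ j)) Filter.atTop (nhds xbar) ∧
      ∀ z ∈ S, F xbar ≤ F z) ∧
    (∀ xt : EuclideanSpace ℝ (Fin n),
      (∃ φ : ℕ → ℕ, StrictMono φ ∧
        Filter.Tendsto (fun j => x (φ j)) Filter.atTop (nhds xt)) →
      xt ∈ S ∧ ∀ z ∈ S, F xt ≤ F z) := by
  obtain ⟨hη0, hη1⟩ := hη
  have hα0 : ∀ k, 0 < α k := fun k => lt_of_lt_of_le halphaBar (hα k).1
  have hα1 : ∀ k, α k ≤ 1 := fun k => (hα k).2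
  -- Step 1: key inner product inequality
  have key : ∀ k, (inner ℝ (gradient F (x k)) (xh k - x k) : ℝ)
      ≤ -(γ / 2) * ‖xh k - x k‖ ^ 2 := by
    intro k
    have h := strongGradIneq (Fk k) γ (hFksc k) (hFkdiff k) (x k) (xh k)
    rw [hgradeq k] at h
    have := hxhdec k
    linarith
  -- Step 2: the iterates remain in S
  have xS : ∀ k, x k ∈ S := by
    intro k
    induction k with
    | zero => exact hx0
    | succ k ih =>
      rw [hupd k, comboEq]
      exact hSconv ih (hxhS k) (by linarith [hα1 k]) (hα0 k).le (by ring)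
  -- Step 3: sufficient decrease
  have dec : ∀ k, η * alphaBar * (γ / 2) * ‖xh k - x k‖ ^ 2 ≤ F (x k) - F (x (k + 1)) := by
    intro k
    have ha := harmijo k
    rw [← hupd k] at ha
    have h1 : η * α k * (inner ℝ (gradient F (x k)) (xh k - x k) : ℝ)
        ≤ η * α k * (-(γ / 2) * ‖xh k - x k‖ ^ 2) :=
      mul_le_mul_of_nonneg_left (key k) (mul_pos hη0 (hα0 k)).le
    have hnn : (0 : ℝ) ≤ η * (γ / 2) * ‖xh k - x k‖ ^ 2 := by positivity
    have h2 := mul_le_mul_of_nonneg_right (hα k).1 hnn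
    nlinarith [ha, h1, h2]
  have hanti : Antitone (fun k => F (x k)) := by
    apply antitone_nat_of_succ_le
    intro k
    have h0 : (0 : ℝ) ≤ η * alphaBar * (γ / 2) * ‖xh k - x k‖ ^ 2 := by positivity
    linarith [dec k]
  -- Step 4: boundedness
  have hco : ∀ C : ℝ, ∃ R, ∀ z, R ≤ ‖z‖ → C ≤ F z := by
    intro C
    have h := hFcoer.eventually (Filter.eventually_ge_atTop C)
    rw [Filter.eventually_comap] at h
    rw [Filter.eventually_atTop] at h
    obtain ⟨R, hR⟩ := h
    exact ⟨R, fun z hz => hR ‖z‖ hz z rfl⟩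
  obtain ⟨R, hR⟩ := hco (F (x 0) + 1)
  have hKsub : {z : EuclideanSpace ℝ (Fin n) | F z ≤ F (x 0)} ⊆ Metric.closedBall 0 R := by
    intro z hz
    simp only [Set.mem_setOf_eq] at hz
    rw [Metric.mem_closedBall, dist_zero_right]
    by_contra h
    push_neg at h
    have := hR z h.le
    linarith
  have hrange : Set.range x ⊆ {z | F z ≤ F (x 0)} := by
    rintro _ ⟨k, rfl⟩
    exact hanti (Nat.zero_le k)
  have hbdd : Bornology.IsBounded (Set.range x) :=
    Metric.isBounded_closedBall.subset (hrange.trans hKsub)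
  -- Step 5: convergence of F (x k) and vanishing of the steps
  have hKcl : IsClosed {z : EuclideanSpace ℝ (Fin n) | F z ≤ F (x 0)} :=
    isClosed_le hFdiff.continuous continuous_const
  have hKcp : IsCompact {z : EuclideanSpace ℝ (Fin n) | F z ≤ F (x 0)} :=
    Metric.isCompact_of_isClosed_isBounded hKcl (Metric.isBounded_closedBall.subset hKsub)
  obtain ⟨m, hmK, hmmin'⟩ := hKcp.exists_isMinOn ⟨x 0, by simp⟩ hFdiff.continuous.continuousOn
  have hmmin : ∀ y ∈ {z : EuclideanSpace ℝ (Fin n) | F z ≤ F (x 0)}, F m ≤ F y :=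
    isMinOn_iff.mp hmmin'
  have hlb : BddBelow (Set.range fun k => F (x k)) := by
    refine ⟨F m, ?_⟩
    rintro _ ⟨k, rfl⟩
    exact hmmin _ (hrange ⟨k, rfl⟩)
  have hbt := tendsto_atTop_ciInf hanti hlb
  have hbt2 : Filter.Tendsto (fun k => F (x (k + 1))) Filter.atTop (𝓝 (⨅ k, F (x k))) :=
    hbt.comp (Filter.tendsto_add_atTop_nat 1)
  have hdiff0 : Filter.Tendsto (fun k => F (x k) - F (x (k + 1))) Filter.atTop (𝓝 0) := by
    simpa using hbt.sub hbt2
  have hc : (0 : ℝ) < η * alphaBar * (γ / 2) := by positivity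
  have hd2 : Filter.Tendsto (fun k => ‖xh k - x k‖ ^ 2) Filter.atTop (𝓝 0) := by
    have hgl : Filter.Tendsto (fun k => (F (x k) - F (x (k + 1))) / (η * alphaBar * (γ / 2)))
        Filter.atTop (𝓝 0) := by
      simpa using hdiff0.div_const (η * alphaBar * (γ / 2))
    refine squeeze_zero (fun k => sq_nonneg _) (fun k => ?_) hgl
    rw [le_div_iff₀ hc]
    linarith [dec k]
  have hdn : Filter.Tendsto (fun k => ‖xh k - x k‖) Filter.atTop (𝓝 0) := by
    have h := (Real.continuous_sqrt.tendsto 0).comp hd2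
    simp only [Real.sqrt_zero] at h
    exact h.congr fun k => Real.sqrt_sq (norm_nonneg _)
  have hxbx : Filter.Tendsto (fun k => ‖xb k - x k‖) Filter.atTop (𝓝 0) := by
    have hgl : Filter.Tendsto (fun k => ε k + ‖xh k - x k‖) Filter.atTop (𝓝 0) := by
      simpa using hεlim.add hdn
    refine squeeze_zero (fun k => norm_nonneg _) (fun k => ?_) hgl
    calc ‖xb k - x k‖ ≤ ‖xb k - xh k‖ + ‖xh k - x k‖ := norm_sub_le_norm_sub_add_norm_sub _ _ _
      _ ≤ ε k + ‖xh k - x k‖ := by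
          have := hxherr k
          rw [norm_sub_rev] at this
          linarith
  -- Step 6: every limit point of the sequence is a minimizer on S
  have hlimpt : ∀ xt : EuclideanSpace ℝ (Fin n),
      (∃ φ : ℕ → ℕ, StrictMono φ ∧
        Filter.Tendsto (fun j => x (φ j)) Filter.atTop (nhds xt)) →
      xt ∈ S ∧ ∀ z ∈ S, F xt ≤ F z := by
    rintro xt ⟨φ, hφ, hxφ⟩
    have hφt : Filter.Tendsto φ Filter.atTop Filter.atTop := hφ.tendsto_atTop
    have hmem : xt ∈ S :=
      hScl.mem_of_tendsto hxφ (Filter.Eventually.of_forall fun j => xS (φ j))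
    refine ⟨hmem, fun z hz => ?_⟩
    have hxbφdiff : Filter.Tendsto (fun j => xb (φ j) - x (φ j)) Filter.atTop (𝓝 0) :=
      tendsto_zero_iff_norm_tendsto_zero.mpr (hxbx.comp hφt)
    have hxbφ : Filter.Tendsto (fun j => xb (φ j)) Filter.atTop (𝓝 xt) := by
      have h := hxbφdiff.add hxφ
      simp only [zero_add] at h
      exact h.congr fun j => by abel
    have hgradφ : Filter.Tendsto (fun j => gradient F (x (φ j))) Filter.atTop
        (𝓝 (gradient F xt)) := by
      rw [tendsto_iff_norm_sub_tendsto_zero]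
      have h0 : Filter.Tendsto (fun j => ‖x (φ j) - xt‖) Filter.atTop (𝓝 0) :=
        tendsto_iff_norm_sub_tendsto_zero.mp hxφ
      have hgl : Filter.Tendsto (fun j => L * ‖x (φ j) - xt‖) Filter.atTop (𝓝 0) := by
        simpa using h0.const_mul L
      exact squeeze_zero (fun j => norm_nonneg _) (fun j => hFLip _ _) hgl
    have hA : Filter.Tendsto (fun j => (inner ℝ (gradient F (x (φ j))) (z - xb (φ j)) : ℝ))
        Filter.atTop (𝓝 (inner ℝ (gradient F xt) (z - xt) : ℝ)) :=
      hgradφ.inner (tendsto_const_nhds.sub hxbφ)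
    have hB : Filter.Tendsto (fun j => -(M * ‖x (φ j) - xb (φ j)‖ * ‖z - xb (φ j)‖))
        Filter.atTop (𝓝 0) := by
      have h1 : Filter.Tendsto (fun j => ‖x (φ j) - xb (φ j)‖) Filter.atTop (𝓝 0) := by
        have := hxbx.comp hφt
        refine this.congr fun j => ?_
        exact norm_sub_rev _ _
      have h2 : Filter.Tendsto (fun j => ‖z - xb (φ j)‖) Filter.atTop (𝓝 ‖z - xt‖) :=
        (continuous_norm.tendsto _).comp (tendsto_const_nhds.sub hxbφ)
      have := ((h1.const_mul M).mul h2).neg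
      simpa using this
    have hBA : ∀ j, -(M * ‖x (φ j) - xb (φ j)‖ * ‖z - xb (φ j)‖)
        ≤ (inner ℝ (gradient F (x (φ j))) (z - xb (φ j)) : ℝ) := by
      intro j
      have hvi : 0 ≤ (inner ℝ (gradient (Fk (φ j)) (xb (φ j))) (z - xb (φ j)) : ℝ) :=
        varIneq (Fk (φ j)) (hFkdiff (φ j)) hSconv (hxbS (φ j)) (hxbmin (φ j)) hz
      have hsplit : (inner ℝ (gradient (Fk (φ j)) (x (φ j))) (z - xb (φ j)) : ℝ)
          = (inner ℝ (gradient (Fk (φ j)) (xb (φ j))) (z - xb (φ j)) : ℝ)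
            + (inner ℝ (gradient (Fk (φ j)) (x (φ j)) - gradient (Fk (φ j)) (xb (φ j)))
                (z - xb (φ j)) : ℝ) := by
        rw [inner_sub_left]; ring
      have habs : |(inner ℝ (gradient (Fk (φ j)) (x (φ j)) - gradient (Fk (φ j)) (xb (φ j)))
          (z - xb (φ j)) : ℝ)| ≤ M * ‖x (φ j) - xb (φ j)‖ * ‖z - xb (φ j)‖ :=
        (abs_real_inner_le_norm _ _).trans
          (mul_le_mul_of_nonneg_right (hFkLip (φ j) _ _) (norm_nonneg _))
      rw [← hgradeq (φ j)]
      have habs' := abs_le.mp habs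
      linarith [hvi, habs'.1, hsplit]
    have hfinal : (0 : ℝ) ≤ (inner ℝ (gradient F xt) (z - xt) : ℝ) :=
      le_of_tendsto_of_tendsto hB hA (Filter.Eventually.of_forall hBA)
    have hgi := gradIneq F hFconv hFdiff xt z
    linarith
  refine ⟨hbdd, ?_, hlimpt⟩
  obtain ⟨a, -, φ, hφ, hconv⟩ :=
    tendsto_subseq_of_bounded hbdd (fun k => Set.mem_range_self k)
  obtain ⟨haS, hamin⟩ := hlimpt a ⟨φ, hφ, hconv⟩
  exact ⟨φ, a, hφ, haS, hconv, hamin⟩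
end

section
/- Let S ⊆ ℝⁿ be nonempty, closed and convex, let g : ℝⁿ → ℝ be differentiable and γ-strongly convex on S (γ > 0), let x̄ ∈ S be a minimizer of g over S, and let x̂ ∈ S. Then (γ/2)‖x̂ − x̄‖² ≤ ⟨∇_S g(x̂), x̄ − x̂⟩ ≤ ‖∇_S g(x̂)‖ ‖x̄ − x̂‖, and consequently ‖x̂ − x̄‖ ≤ (2/γ) ‖∇_S g(x̂)‖, where ∇_S g(x̂) is the projected gradient of g at x̂. -/
/-- The tangent cone to `S` at `x`: the closure of `{t • (z - x) : t ≥ 0, z ∈ S}`. -/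
def tangentConeTo {n : ℕ} (S : Set (EuclideanSpace ℝ (Fin n)))
    (x : EuclideanSpace ℝ (Fin n)) : Set (EuclideanSpace ℝ (Fin n)) :=
  closure {v | ∃ t : ℝ, 0 ≤ t ∧ ∃ z ∈ S, v = t • (z - x)}

/-- `v` is the projected gradient of `g` at `x` w.r.t. `S`: `v` is the point of the
tangent cone `T_S(x)` nearest to `-∇g(x)`. -/
def IsProjGrad {n : ℕ} (S : Set (EuclideanSpace ℝ (Fin n)))
    (g : EuclideanSpace ℝ (Fin n) → ℝ) (x v : EuclideanSpace ℝ (Fin n)) : Prop :=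
  v ∈ tangentConeTo S x ∧
    ∀ w ∈ tangentConeTo S x, ‖-gradient g x - v‖ ≤ ‖-gradient g x - w‖

open Set Filter Topology

lemma tangentConeTo_smul_mem {n : ℕ} {S : Set (EuclideanSpace ℝ (Fin n))}
    {x v : EuclideanSpace ℝ (Fin n)} {t : ℝ} (ht : 0 ≤ t)
    (hv : v ∈ tangentConeTo S x) : t • v ∈ tangentConeTo S x := by
  refine map_mem_closure (continuous_const_smul t) hv ?_
  rintro _ ⟨s, hs, z, hz, rfl⟩
  exact ⟨t * s, mul_nonneg ht hs, z, hz, (mul_smul t s _).symm⟩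

lemma tangentConeTo_add_mem {n : ℕ} {S : Set (EuclideanSpace ℝ (Fin n))}
    (hSconv : Convex ℝ S) {x a b : EuclideanSpace ℝ (Fin n)}
    (ha : a ∈ tangentConeTo S x) (hb : b ∈ tangentConeTo S x) :
    a + b ∈ tangentConeTo S x := by
  refine map_mem_closure₂ continuous_add ha hb ?_
  rintro _ ⟨s, hs, z, hz, rfl⟩ _ ⟨t, ht, w, hw, rfl⟩
  rcases eq_or_lt_of_le (add_nonneg hs ht : (0:ℝ) ≤ s + t) with h | h
  · have hs0 : s = 0 := by linarith
    have ht0 : t = 0 := by linarith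
    refine ⟨0, le_refl 0, z, hz, ?_⟩
    simp [hs0, ht0]
  · refine ⟨s + t, h.le, (s / (s + t)) • z + (t / (s + t)) • w,
      hSconv hz hw (div_nonneg hs h.le) (div_nonneg ht h.le) (by field_simp), ?_⟩
    have hne : s + t ≠ 0 := ne_of_gt h
    rw [smul_sub, smul_sub, smul_sub, smul_add, smul_smul, smul_smul]
    rw [mul_div_cancel₀ _ hne, mul_div_cancel₀ _ hne]
    module

set_option maxHeartbeats 1000000 in
theorem stmt_7 {n : ℕ}
    (S : Set (EuclideanSpace ℝ (Fin n)))
    (hSne : S.Nonempty) (hScl : IsClosed S) (hSconv : Convex ℝ S)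
    (g : EuclideanSpace ℝ (Fin n) → ℝ) (γ : ℝ) (hγ : 0 < γ)
    (hgdiff : Differentiable ℝ g)
    (hgsc : ConvexOn ℝ S (fun z => g z - γ / 2 * ‖z‖ ^ 2))
    (xb xh : EuclideanSpace ℝ (Fin n)) (hxbS : xb ∈ S) (hxhS : xh ∈ S)
    (hxbmin : ∀ z ∈ S, g xb ≤ g z)
    (pg : EuclideanSpace ℝ (Fin n)) (hpg : IsProjGrad S g xh pg) :
    γ / 2 * ‖xh - xb‖ ^ 2 ≤ (inner ℝ pg (xb - xh) : ℝ) ∧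
    (inner ℝ pg (xb - xh) : ℝ) ≤ ‖pg‖ * ‖xb - xh‖ ∧
    ‖xh - xb‖ ≤ 2 / γ * ‖pg‖ := by
  set u : EuclideanSpace ℝ (Fin n) := -gradient g xh with hu
  set d : EuclideanSpace ℝ (Fin n) := xb - xh with hd
  have hdK : d ∈ tangentConeTo S xh :=
    subset_closure ⟨1, zero_le_one, xb, hxbS, (one_smul ℝ _).symm⟩
  -- variational inequality for the cone projection
  have hvar : ∀ w ∈ tangentConeTo S xh, (inner ℝ (u - pg) w : ℝ) ≤ 0 := by
    intro w hw
    refine le_of_forall_pos_le_add (fun ε hε => ?_)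
    set s : ℝ := ε / (‖w‖ ^ 2 + 1) with hs
    have hwpos : (0:ℝ) < ‖w‖ ^ 2 + 1 := by positivity
    have hspos : 0 < s := div_pos hε hwpos
    have hmem : pg + s • w ∈ tangentConeTo S xh :=
      tangentConeTo_add_mem hSconv hpg.1 (tangentConeTo_smul_mem hspos.le hw)
    have h1 : ‖u - pg‖ ≤ ‖u - (pg + s • w)‖ := hpg.2 _ hmem
    have h2 : ‖u - pg‖ ^ 2 ≤ ‖u - (pg + s • w)‖ ^ 2 := by
      have := norm_nonneg (u - pg); nlinarith [norm_nonneg (u - (pg + s • w))]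
    have h3 : u - (pg + s • w) = (u - pg) - s • w := by abel
    rw [h3] at h2
    have h2' : ‖u - pg - s • w‖ ^ 2
        = ‖u - pg‖ ^ 2 - 2 * (s * (inner ℝ (u - pg) w : ℝ)) + s ^ 2 * ‖w‖ ^ 2 := by
      rw [norm_sub_sq_real, inner_smul_right, norm_smul, Real.norm_eq_abs, mul_pow, sq_abs]
    rw [h2'] at h2
    have h4 : 2 * (s * (inner ℝ (u - pg) w : ℝ)) ≤ s ^ 2 * ‖w‖ ^ 2 := by linarith
    have h5 : (inner ℝ (u - pg) w : ℝ) ≤ s * ‖w‖ ^ 2 / 2 := by nlinarith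
    have h6 : s * ‖w‖ ^ 2 / 2 ≤ ε := by
      have hsle : s * (‖w‖ ^ 2 + 1) = ε := by rw [hs]; field_simp
      nlinarith [hspos.le, sq_nonneg ‖w‖]
    linarith
  have hupg : (inner ℝ u d : ℝ) ≤ (inner ℝ pg d : ℝ) := by
    have := hvar d hdK
    rw [inner_sub_left] at this; linarith
  -- strong convexity first-order inequality
  have hkey : γ / 2 * ‖xh - xb‖ ^ 2 ≤ (inner ℝ u d : ℝ) := by
    set h : EuclideanSpace ℝ (Fin n) → ℝ := fun z => g z - γ / 2 * ‖z‖ ^ 2 with hh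
    have hDg : HasFDerivAt g (fderiv ℝ g xh) xh := (hgdiff xh).hasFDerivAt
    have hDn : HasFDerivAt (fun z : EuclideanSpace ℝ (Fin n) => γ / 2 * ‖z‖ ^ 2)
        ((γ / 2) • (2 • (innerSL ℝ xh))) xh :=
      ((hasStrictFDerivAt_norm_sq xh).hasFDerivAt).const_mul (γ / 2)
    have hDh : HasFDerivAt h (fderiv ℝ g xh - (γ / 2) • (2 • (innerSL ℝ xh))) xh :=
      hDg.sub hDn
    have hline : HasDerivAt (fun t : ℝ => xh + t • d) d 0 := by
      simpa using ((hasDerivAt_id (0:ℝ)).smul_const d).const_add xh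
    have hphi : HasDerivAt (fun t : ℝ => h (xh + t • d))
        ((fderiv ℝ g xh - (γ / 2) • (2 • (innerSL ℝ xh))) d) 0 := by
      have := HasFDerivAt.comp_hasDerivAt (0:ℝ)
        (show HasFDerivAt h (fderiv ℝ g xh - (γ / 2) • (2 • (innerSL ℝ xh)))
          ((fun t : ℝ => xh + t • d) 0) by simpa using hDh) hline
      simpa [Function.comp_def] using this
    have hslope : ∀ t ∈ Ioc (0:ℝ) 1, slope (fun t : ℝ => h (xh + t • d)) 0 t ≤ h xb - h xh := by
      intro t ht
      have hmem : xh + t • d = (1 - t) • xh + t • xb := by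
        rw [hd]; module
      have := hgsc.2 hxhS hxbS (by linarith [ht.2] : (0:ℝ) ≤ 1 - t) ht.1.le (by ring)
      rw [← hmem] at this
      rw [slope_def_field]
      simp only [zero_smul, add_zero, sub_zero, smul_eq_mul] at this ⊢
      rw [div_le_iff₀ ht.1]
      nlinarith [this]
    have hder : ((fderiv ℝ g xh - (γ / 2) • (2 • (innerSL ℝ xh))) d) ≤ h xb - h xh := by
      have htend : Tendsto (slope (fun t : ℝ => h (xh + t • d)) 0) (𝓝[>] (0:ℝ))
          (𝓝 ((fderiv ℝ g xh - (γ / 2) • (2 • (innerSL ℝ xh))) d)) :=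
        (hasDerivAt_iff_tendsto_slope.1 hphi).mono_left
          (nhdsWithin_mono _ (fun t ht => ne_of_gt ht))
      refine le_of_tendsto htend ?_
      filter_upwards [Ioc_mem_nhdsGT (zero_lt_one)] with t ht
      exact hslope t ht
    have hfg : fderiv ℝ g xh d = (inner ℝ (gradient g xh) d : ℝ) := by
      have := (hgdiff xh).hasGradientAt.hasFDerivAt.fderiv
      rw [this]; simp
    have hfd : ((fderiv ℝ g xh - (γ / 2) • (2 • (innerSL ℝ xh))) d)
        = (inner ℝ (gradient g xh) d : ℝ) - γ * (inner ℝ xh d : ℝ) := by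
      rw [ContinuousLinearMap.sub_apply, ContinuousLinearMap.smul_apply,
        ContinuousLinearMap.smul_apply, hfg, innerSL_apply_apply, smul_eq_mul, nsmul_eq_mul]
      push_cast
      ring
    rw [hfd] at hder
    have hgle : g xb ≤ g xh := hxbmin xh hxhS
    have hnormsq : ‖xh - xb‖ ^ 2 = ‖xh‖ ^ 2 - 2 * (inner ℝ xh xb : ℝ) + ‖xb‖ ^ 2 :=
      norm_sub_sq_real xh xb
    have hid : (inner ℝ xh d : ℝ) = (inner ℝ xh xb : ℝ) - ‖xh‖ ^ 2 := by
      rw [hd, inner_sub_right, real_inner_self_eq_norm_sq]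
    have hud : (inner ℝ u d : ℝ) = -(inner ℝ (gradient g xh) d : ℝ) := by
      rw [hu, inner_neg_left]
    simp only [hh] at hder
    rw [hud]
    nlinarith [hder]
  have h1 : γ / 2 * ‖xh - xb‖ ^ 2 ≤ (inner ℝ pg d : ℝ) := le_trans hkey hupg
  have h2 : (inner ℝ pg d : ℝ) ≤ ‖pg‖ * ‖d‖ := real_inner_le_norm pg d
  refine ⟨h1, h2, ?_⟩
  have hrev : ‖d‖ = ‖xh - xb‖ := by rw [hd, norm_sub_rev]
  rw [hrev] at h2
  rcases eq_or_lt_of_le (norm_nonneg (xh - xb)) with h0 | h0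
  · rw [← h0]; positivity
  · have : γ / 2 * ‖xh - xb‖ ^ 2 ≤ ‖pg‖ * ‖xh - xb‖ := le_trans h1 h2
    rw [div_mul_eq_mul_div, le_div_iff₀ hγ]
    nlinarith [this]
end

section
/- Let S ⊆ ℝⁿ be nonempty, closed and convex, γ > 0, θ ∈ (0,1), and x⁽⁰⁾ ∈ S. For each k ∈ ℕ let F_k : ℝⁿ → ℝ be differentiable and γ-strongly convex, let x̄⁽ᵏ⁾ ∈ S be the minimizer of F_k over S, and let x̂⁽ᵏ⁾ ∈ S satisfy ‖∇_S F_k(x̂⁽ᵏ⁾)‖ ≤ θᵏ ‖∇_S F_k(x⁽⁰⁾)‖. Then ‖x̂⁽ᵏ⁾ − x̄⁽ᵏ⁾‖ ≤ ε_k := θᵏ (2/γ) ‖∇_S F_k(x⁽⁰⁾)‖ for all k; in particular, if sup_k ‖∇_S F_k(x⁽⁰⁾)‖ < ∞, then ε_k > 0 can occur with ε_k → 0 and hence ‖x̂⁽ᵏ⁾ − x̄⁽ᵏ⁾‖ → 0. -/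
open Set Filter
open scoped RealInnerProductSpace

section Aux

variable {n : ℕ}

/-- First-order condition for a differentiable convex function. -/
lemma firstOrderAux {g : EuclideanSpace ℝ (Fin n) → ℝ}
    (hd : Differentiable ℝ g) (hc : ConvexOn ℝ Set.univ g)
    (x y : EuclideanSpace ℝ (Fin n)) :
    fderiv ℝ g x (y - x) ≤ g y - g x := by
  set c : ℝ → EuclideanSpace ℝ (Fin n) := fun t => x + t • (y - x) with hcdef
  have hline : ∀ t : ℝ, HasDerivAt c (y - x) t := by
    intro t
    simpa [hcdef] using ((hasDerivAt_id t).smul_const (y - x)).const_add x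
  have hc0 : c 0 = x := by simp [hcdef]
  have hc1 : c 1 = y := by simp [hcdef]
  have hφd : HasDerivAt (fun t => g (c t)) (fderiv ℝ g (c 0) (y - x)) 0 :=
    ((hd (c 0)).hasFDerivAt).comp_hasDerivAt 0 (hline 0)
  rw [hc0] at hφd
  have hφc : ConvexOn ℝ Set.univ (fun t => g (c t)) := by
    refine ⟨convex_univ, fun s _ t _ a b ha hb hab => ?_⟩
    have hcomb : c (a * s + b * t) = a • c s + b • c t := by
      obtain rfl : b = 1 - a := by linarith
      simp only [hcdef]
      module
    simp only [smul_eq_mul]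
    rw [hcomb]
    exact hc.2 (Set.mem_univ _) (Set.mem_univ _) ha hb hab
  have hs := hφc.le_slope_of_hasDerivAt (Set.mem_univ (0:ℝ)) (Set.mem_univ (1:ℝ)) one_pos hφd
  rw [slope_def_field] at hs
  rw [hc0, hc1] at hs
  simpa using hs

lemma inner_gradient_eq {g : EuclideanSpace ℝ (Fin n) → ℝ} {x : EuclideanSpace ℝ (Fin n)}
    (hd : DifferentiableAt ℝ g x) (d : EuclideanSpace ℝ (Fin n)) :
    ⟪gradient g x, d⟫ = fderiv ℝ g x d := by
  have h := hd.hasGradientAt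
  rw [hasGradientAt_iff_hasFDerivAt] at h
  rw [h.fderiv]
  simp

lemma tangent_convex {S : Set (EuclideanSpace ℝ (Fin n))} (hS : Convex ℝ S)
    (x : EuclideanSpace ℝ (Fin n)) : Convex ℝ (tangentConeTo S x) := by
  refine Convex.closure ?_
  rintro v₁ ⟨t₁, ht₁, z₁, hz₁, rfl⟩ v₂ ⟨t₂, ht₂, z₂, hz₂, rfl⟩ a b ha hb hab
  by_cases hs : a * t₁ + b * t₂ = 0
  · have h1 : a * t₁ = 0 := by nlinarith [mul_nonneg ha ht₁, mul_nonneg hb ht₂]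
    have h2 : b * t₂ = 0 := by nlinarith [mul_nonneg ha ht₁, mul_nonneg hb ht₂]
    refine ⟨0, le_refl 0, z₁, hz₁, ?_⟩
    rw [zero_smul, smul_smul, smul_smul, h1, h2, zero_smul, zero_smul, add_zero]
  · have hs' : 0 < a * t₁ + b * t₂ :=
      lt_of_le_of_ne (by positivity) (Ne.symm hs)
    refine ⟨a * t₁ + b * t₂, le_of_lt hs',
      (a * t₁ / (a * t₁ + b * t₂)) • z₁ + (b * t₂ / (a * t₁ + b * t₂)) • z₂,
      hS hz₁ hz₂ (by positivity) (by positivity) (by field_simp), ?_⟩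
    have hne : a * t₁ + b * t₂ ≠ 0 := hs
    have e1 : (a * t₁ + b * t₂) • ((a * t₁ / (a * t₁ + b * t₂)) • z₁ +
        (b * t₂ / (a * t₁ + b * t₂)) • z₂ - x)
        = (a * t₁) • z₁ + (b * t₂) • z₂ - (a * t₁ + b * t₂) • x := by
      have e2 : (a * t₁ + b * t₂) * (a * t₁ / (a * t₁ + b * t₂)) = a * t₁ := by
        field_simp
      have e3 : (a * t₁ + b * t₂) * (b * t₂ / (a * t₁ + b * t₂)) = b * t₂ := by
        field_simp
      rw [smul_sub, smul_add, smul_smul, smul_smul, e2, e3]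
    rw [e1, smul_smul, smul_smul]
    module

lemma two_smul_mem_tangent {S : Set (EuclideanSpace ℝ (Fin n))}
    {x v : EuclideanSpace ℝ (Fin n)} (hv : v ∈ tangentConeTo S x) :
    (2 : ℝ) • v ∈ tangentConeTo S x := by
  have hcont : Continuous fun y : EuclideanSpace ℝ (Fin n) => (2 : ℝ) • y :=
    continuous_const_smul _
  refine map_mem_closure hcont hv ?_
  rintro w ⟨t, ht, z, hz, rfl⟩
  exact ⟨2 * t, by linarith, z, hz, by rw [smul_smul]⟩

set_option maxHeartbeats 1000000 in
lemma proj_inner_le {S : Set (EuclideanSpace ℝ (Fin n))} (hSconv : Convex ℝ S)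
    {g : EuclideanSpace ℝ (Fin n) → ℝ} {x v : EuclideanSpace ℝ (Fin n)}
    (h : IsProjGrad S g x v) :
    ∀ w ∈ tangentConeTo S x, ⟪-gradient g x - v, w - v⟫ ≤ 0 := by
  obtain ⟨hvK, hmin⟩ := h
  haveI : Nonempty (tangentConeTo S x) := ⟨⟨v, hvK⟩⟩
  refine (norm_eq_iInf_iff_real_inner_le_zero (tangent_convex hSconv x) hvK).mp ?_
  refine le_antisymm (le_ciInf fun w => hmin w.1 w.2) ?_
  have hbdd : BddBelow (Set.range fun w : tangentConeTo S x =>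
      ‖-gradient g x - (w : EuclideanSpace ℝ (Fin n))‖) := by
    refine ⟨0, ?_⟩
    rintro r ⟨w, rfl⟩
    exact norm_nonneg _
  exact ciInf_le hbdd ⟨v, hvK⟩

/-- Main quantitative bound: `‖x - b‖ ≤ (2/γ) ‖v‖` when `b` minimizes the strongly
convex `F` over `S` and `v` is the projected gradient at `x ∈ S`. -/
lemma key_bound {S : Set (EuclideanSpace ℝ (Fin n))} (hSconv : Convex ℝ S)
    {γ : ℝ} (hγ : 0 < γ) {F : EuclideanSpace ℝ (Fin n) → ℝ}
    (hFd : Differentiable ℝ F)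
    (hFsc : ConvexOn ℝ Set.univ (fun z => F z - γ / 2 * ‖z‖ ^ 2))
    {b x v : EuclideanSpace ℝ (Fin n)} (hbS : b ∈ S) (hxS : x ∈ S)
    (hbmin : ∀ z ∈ S, F b ≤ F z) (hv : IsProjGrad S F x v) :
    ‖x - b‖ ≤ 2 / γ * ‖v‖ := by
  -- Step A: quadratic growth at the minimizer
  have hstrong : StrongConvexOn Set.univ γ F := strongConvexOn_iff_convex.mpr hFsc
  have hA : F b + γ / 4 * ‖x - b‖ ^ 2 ≤ F x := by
    have h1 := hstrong.2 (Set.mem_univ x) (Set.mem_univ b)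
      (by norm_num : (0:ℝ) ≤ 1/2) (by norm_num : (0:ℝ) ≤ 1/2) (by norm_num)
    have h2 : F b ≤ F ((1/2 : ℝ) • x + (1/2 : ℝ) • b) :=
      hbmin _ (hSconv hxS hbS (by norm_num) (by norm_num) (by norm_num))
    simp only [smul_eq_mul] at h1
    nlinarith [h1, h2]
  -- Step B: first-order strong convexity inequality
  have hGfd : HasFDerivAt (fun z : EuclideanSpace ℝ (Fin n) => F z - γ / 2 * ‖z‖ ^ 2)
      (fderiv ℝ F x - (γ / 2) • (2 • (innerSL ℝ x))) x :=
    (hFd x).hasFDerivAt.sub ((hasStrictFDerivAt_norm_sq x).hasFDerivAt.const_mul (γ / 2))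
  have hGd : Differentiable ℝ (fun z : EuclideanSpace ℝ (Fin n) => F z - γ / 2 * ‖z‖ ^ 2) := by
    intro z
    exact ((hFd z).sub
      (((hasStrictFDerivAt_norm_sq z).hasFDerivAt.const_mul (γ / 2)).differentiableAt))
  have hfo := firstOrderAux hGd hFsc x b
  rw [hGfd.fderiv] at hfo
  simp only [ContinuousLinearMap.sub_apply, ContinuousLinearMap.smul_apply,
    ContinuousLinearMap.coe_smul', Pi.smul_apply, innerSL_apply_apply, smul_eq_mul,
    nsmul_eq_mul, Nat.cast_ofNat] at hfo
  have hg : ⟪gradient F x, b - x⟫ = fderiv ℝ F x (b - x) :=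
    inner_gradient_eq (hFd x) (b - x)
  have hnorm : ‖b - x‖ ^ 2 = ‖b‖ ^ 2 - 2 * ⟪b, x⟫ + ‖x‖ ^ 2 := norm_sub_sq_real b x
  have hinner : ⟪x, b - x⟫ = ⟪b, x⟫ - ‖x‖ ^ 2 := by
    rw [inner_sub_right, real_inner_self_eq_norm_sq, real_inner_comm]
  have hB : ⟪gradient F x, b - x⟫ + γ / 2 * ‖b - x‖ ^ 2 ≤ F b - F x := by
    rw [hg, hnorm]
    rw [hinner] at hfo
    nlinarith [hfo]
  -- Step C: projection inequality
  have hproj := proj_inner_le hSconv hv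
  have h2v := two_smul_mem_tangent hv.1
  have hvv : ⟪-gradient F x - v, v⟫ ≤ 0 := by
    have := hproj _ h2v
    have e : (2 : ℝ) • v - v = v := by module
    rwa [e] at this
  have hbx : b - x ∈ tangentConeTo S x :=
    subset_closure ⟨1, zero_le_one, b, hbS, by rw [one_smul]⟩
  have hwb := hproj _ hbx
  have hfin : ⟪-gradient F x, b - x⟫ ≤ ⟪v, b - x⟫ := by
    have e : ⟪-gradient F x, b - x⟫
        = ⟪-gradient F x - v, (b - x) - v⟫ + ⟪-gradient F x - v, v⟫
          + ⟪v, b - x⟫ := by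
      simp only [inner_sub_left, inner_sub_right]
      ring
    rw [e]
    linarith [hwb, hvv]
  have hneg : ⟪-gradient F x, b - x⟫ = -⟪gradient F x, b - x⟫ := by
    rw [inner_neg_left]
  have hcs : ⟪v, b - x⟫ ≤ ‖v‖ * ‖b - x‖ := real_inner_le_norm v (b - x)
  have hrev : ‖b - x‖ = ‖x - b‖ := norm_sub_rev b x
  -- Combine everything
  have hfinal : 3 * γ / 4 * ‖x - b‖ ^ 2 ≤ ‖v‖ * ‖x - b‖ := by
    rw [hrev] at hB hcs
    nlinarith [hA, hB, hfin, hcs, hneg]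
  rcases eq_or_lt_of_le (norm_nonneg (x - b)) with h0 | h0
  · rw [← h0]
    positivity
  · rw [div_mul_eq_mul_div, le_div_iff₀ hγ]
    nlinarith [hfinal, h0, norm_nonneg v, mul_pos h0 h0]

end Aux

theorem stmt_8 {n : ℕ}
    (S : Set (EuclideanSpace ℝ (Fin n)))
    (hSne : S.Nonempty) (hScl : IsClosed S) (hSconv : Convex ℝ S)
    (γ θ : ℝ) (hγ : 0 < γ) (hθ : θ ∈ Set.Ioo (0 : ℝ) 1)
    (x0 : EuclideanSpace ℝ (Fin n)) (hx0 : x0 ∈ S)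
    (Fk : ℕ → EuclideanSpace ℝ (Fin n) → ℝ)
    (hFkdiff : ∀ k, Differentiable ℝ (Fk k))
    (hFksc : ∀ k, ConvexOn ℝ Set.univ (fun z => Fk k z - γ / 2 * ‖z‖ ^ 2))
    (xb xh : ℕ → EuclideanSpace ℝ (Fin n))
    (hxbS : ∀ k, xb k ∈ S)
    (hxbmin : ∀ k, ∀ z ∈ S, Fk k (xb k) ≤ Fk k z)
    (hxhS : ∀ k, xh k ∈ S)
    (pgh pg0 : ℕ → EuclideanSpace ℝ (Fin n))
    (hpgh : ∀ k, IsProjGrad S (Fk k) (xh k) (pgh k))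
    (hpg0 : ∀ k, IsProjGrad S (Fk k) x0 (pg0 k))
    (hstop : ∀ k, ‖pgh k‖ ≤ θ ^ k * ‖pg0 k‖) :
    (∀ k, ‖xh k - xb k‖ ≤ θ ^ k * (2 / γ) * ‖pg0 k‖) ∧
    ((∃ B : ℝ, ∀ k, ‖pg0 k‖ ≤ B) →
      Filter.Tendsto (fun k => θ ^ k * (2 / γ) * ‖pg0 k‖) Filter.atTop (nhds 0) ∧
      Filter.Tendsto (fun k => ‖xh k - xb k‖) Filter.atTop (nhds 0)) := by
  obtain ⟨hθ0, hθ1⟩ := hθ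
  have hmain : ∀ k, ‖xh k - xb k‖ ≤ θ ^ k * (2 / γ) * ‖pg0 k‖ := by
    intro k
    have h1 : ‖xh k - xb k‖ ≤ 2 / γ * ‖pgh k‖ :=
      key_bound hSconv hγ (hFkdiff k) (hFksc k) (hxbS k) (hxhS k) (hxbmin k) (hpgh k)
    have h2 := hstop k
    calc ‖xh k - xb k‖ ≤ 2 / γ * ‖pgh k‖ := h1
      _ ≤ 2 / γ * (θ ^ k * ‖pg0 k‖) := by
          apply mul_le_mul_of_nonneg_left h2 (by positivity)
      _ = θ ^ k * (2 / γ) * ‖pg0 k‖ := by ring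
  refine ⟨hmain, ?_⟩
  rintro ⟨B, hB⟩
  have hθt : Tendsto (fun k : ℕ => θ ^ k) atTop (nhds 0) :=
    tendsto_pow_atTop_nhds_zero_of_lt_one (le_of_lt hθ0) hθ1
  have hBtend : Tendsto (fun k : ℕ => θ ^ k * (2 / γ * B)) atTop (nhds 0) := by
    simpa using hθt.mul_const (2 / γ * B)
  have hlb : ∀ k : ℕ, 0 ≤ θ ^ k * (2 / γ) * ‖pg0 k‖ := by
    intro k
    positivity
  have hub : ∀ k : ℕ, θ ^ k * (2 / γ) * ‖pg0 k‖ ≤ θ ^ k * (2 / γ * B) := by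
    intro k
    have h1 : (0:ℝ) ≤ θ ^ k * (2 / γ) := by positivity
    calc θ ^ k * (2 / γ) * ‖pg0 k‖ ≤ θ ^ k * (2 / γ) * B :=
          mul_le_mul_of_nonneg_left (hB k) h1
      _ = θ ^ k * (2 / γ * B) := by ring
  have ht1 : Tendsto (fun k : ℕ => θ ^ k * (2 / γ) * ‖pg0 k‖) atTop (nhds 0) :=
    squeeze_zero hlb hub hBtend
  exact ⟨ht1, squeeze_zero (fun k => norm_nonneg _) hmain ht1⟩
end

section
/- If y_j > 0 for all j and the linear map x ↦ Ax is injective, then the generalized Kullback–Leibler divergence D_KL is strictly convex on the nonnegative orthant Ω = {x ∈ ℝⁿ : x ≥ 0}. -/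
theorem stmt_14 {m n : ℕ} (hm : 0 < m) (hn : 0 < n)
    (A : Matrix (Fin m) (Fin n) ℝ) (hA : ∀ i j, 0 ≤ A i j)
    (hAcol : ∀ j, ∑ i, A i j = 1)
    (b : Fin m → ℝ) (hb : ∀ j, 0 < b j)
    (y : Fin m → ℝ) (hy : ∀ j, 0 < y j)
    (hinj : Function.Injective (A.mulVec : (Fin n → ℝ) → (Fin m → ℝ))) :
    StrictConvexOn ℝ {x : EuclideanSpace ℝ (Fin n) | ∀ i, 0 ≤ x i}
      (fun x => ∑ j, (y j * Real.log (y j / ((∑ i, A j i * x i) + b j)) +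
        ((∑ i, A j i * x i) + b j) - y j)) := by
  constructor
  · intro x hx z hz a c ha hc hac i
    simp only [PiLp.add_apply, PiLp.smul_apply, smul_eq_mul]
    exact add_nonneg (mul_nonneg ha (hx i)) (mul_nonneg hc (hz i))
  · intro x hx z hz hxz a c ha hc hac
    set p : Fin m → ℝ := fun j => (∑ i, A j i * x i) + b j with hp
    set q : Fin m → ℝ := fun j => (∑ i, A j i * z i) + b j with hq
    have hppos : ∀ j, 0 < p j := fun j =>
      add_pos_of_nonneg_of_pos (Finset.sum_nonneg fun i _ => mul_nonneg (hA j i) (hx i)) (hb j)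
    have hqpos : ∀ j, 0 < q j := fun j =>
      add_pos_of_nonneg_of_pos (Finset.sum_nonneg fun i _ => mul_nonneg (hA j i) (hz i)) (hb j)
    have key : ∀ j, (∑ i, A j i * (a • x + c • z) i) + b j = a * p j + c * q j := by
      intro j
      simp only [PiLp.add_apply, PiLp.smul_apply, smul_eq_mul, hp, hq]
      have : ∑ i, A j i * (a * x i + c * z i)
          = a * ∑ i, A j i * x i + c * ∑ i, A j i * z i := by
        rw [Finset.mul_sum, Finset.mul_sum, ← Finset.sum_add_distrib]
        exact Finset.sum_congr rfl fun i _ => by ring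
      rw [this]; nlinarith [hb j]
    have hmv : A.mulVec x ≠ A.mulVec z := fun h => hxz (WithLp.ofLp_injective 2 (hinj h))
    obtain ⟨j0, hj0⟩ := Function.ne_iff.mp hmv
    have hpq : p j0 ≠ q j0 := by
      have hx0 : A.mulVec x j0 = ∑ i, A j0 i * x i := by
        simp [Matrix.mulVec, dotProduct]
      have hz0 : A.mulVec z j0 = ∑ i, A j0 i * z i := by
        simp [Matrix.mulVec, dotProduct]
      simp only [hp, hq]
      intro h
      exact hj0 (by rw [hx0, hz0]; linarith)
    have hconc : ∀ j, a * Real.log (p j) + c * Real.log (q j) ≤ Real.log (a * p j + c * q j) := by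
      intro j
      have := strictConcaveOn_log_Ioi.concaveOn.2 (Set.mem_Ioi.mpr (hppos j))
        (Set.mem_Ioi.mpr (hqpos j)) ha.le hc.le hac
      simpa [smul_eq_mul] using this
    have hconc0 : a * Real.log (p j0) + c * Real.log (q j0)
        < Real.log (a * p j0 + c * q j0) := by
      have := strictConcaveOn_log_Ioi.2 (Set.mem_Ioi.mpr (hppos j0))
        (Set.mem_Ioi.mpr (hqpos j0)) hpq ha hc hac
      simpa [smul_eq_mul] using this
    have hposc : ∀ j, 0 < a * p j + c * q j := fun j => by nlinarith [hppos j, hqpos j]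
    simp only [smul_eq_mul, Finset.mul_sum, ← Finset.sum_add_distrib]
    refine Finset.sum_lt_sum (fun j _ => ?_) ⟨j0, Finset.mem_univ j0, ?_⟩
    · rw [key j, Real.log_div (hy j).ne' (hposc j).ne',
        Real.log_div (hy j).ne' (hppos j).ne', Real.log_div (hy j).ne' (hqpos j).ne']
      rw [show (∑ i, A j i * x i) + b j = p j from rfl,
        show (∑ i, A j i * z i) + b j = q j from rfl]
      have h := mul_le_mul_of_nonneg_left (hconc j) (hy j).le
      have hc1 : c = 1 - a := by linarith
      rw [hc1] at h ⊢
      nlinarith [h]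
    · rw [key j0, Real.log_div (hy j0).ne' (hposc j0).ne',
        Real.log_div (hy j0).ne' (hppos j0).ne', Real.log_div (hy j0).ne' (hqpos j0).ne']
      rw [show (∑ i, A j0 i * x i) + b j0 = p j0 from rfl,
        show (∑ i, A j0 i * z i) + b j0 = q j0 from rfl]
      have h := mul_lt_mul_of_pos_left hconc0 (hy j0)
      have hc1 : c = 1 - a := by linarith
      rw [hc1] at h ⊢
      nlinarith [h]
end

section
/- Suppose y_j > 0 for all j and the linear map x ↦ Ax is injective. Then for every bounded convex set S contained in the nonnegative orthant Ω = {x ∈ ℝⁿ : x ≥ 0}, there exists m₀ > 0 such that D_KL is m₀-strongly convex on S, i.e., D_KL − (m₀/2)‖·‖² is convex on S. -/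
open Real Set

lemma aux_convex (M : ℝ) (hM : 0 < M) :
    ConvexOn ℝ (Set.Ioc 0 M) (fun t => 2*M^2 * (-Real.log t) - t^2) := by
  have hint : interior (Set.Ioc (0:ℝ) M) = Set.Ioo 0 M := interior_Ioc
  apply convexOn_of_hasDerivWithinAt2_nonneg (f' := fun t => 2*M^2 * (-t⁻¹) - 2*t)
    (f'' := fun t => 2*M^2 * (t^2)⁻¹ - 2) (convex_Ioc 0 M)
  · apply ContinuousOn.sub
    · apply ContinuousOn.mul continuousOn_const
      exact (Real.continuousOn_log.mono (fun t ht => ne_of_gt ht.1)).neg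
    · fun_prop
  · intro t ht
    rw [hint] at ht
    have h1 : HasDerivAt (fun t : ℝ => 2*M^2 * (-Real.log t) - t^2) (2*M^2 * (-t⁻¹) - 2*t) t := by
      have hl := ((Real.hasDerivAt_log (ne_of_gt ht.1)).neg.const_mul (2*M^2))
      have hp := hasDerivAt_pow 2 t
      exact (hl.sub hp).congr_deriv (by simp)
    exact h1.hasDerivWithinAt
  · intro t ht
    rw [hint] at ht
    have h2 : HasDerivAt (fun t : ℝ => 2*M^2 * (-t⁻¹) - 2*t) (2*M^2 * (t^2)⁻¹ - 2) t := by
      have hi := ((hasDerivAt_inv (ne_of_gt ht.1)).neg.const_mul (2*M^2))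
      have hd := (hasDerivAt_id t).const_mul (2:ℝ)
      exact (hi.sub hd).congr_deriv (by simp)
    exact h2.hasDerivWithinAt
  · intro t ht
    rw [hint] at ht
    have h0 : 0 < t^2 := pow_pos ht.1 2
    have h1 : t^2 ≤ M^2 := by nlinarith [ht.1.le, ht.2.le]
    have h2 : (1:ℝ) ≤ M^2 * (t^2)⁻¹ := by
      rw [le_mul_inv_iff₀ h0]
      linarith
    nlinarith

lemma aux_key {M u v a c : ℝ} (hM : 0 < M) (hu : u ∈ Set.Ioc 0 M) (hv : v ∈ Set.Ioc 0 M)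
    (ha : 0 ≤ a) (hc : 0 ≤ c) (hac : a + c = 1) :
    -Real.log (a*u + c*v) ≤ -(a * Real.log u) - c * Real.log v - a*c*(u-v)^2/(2*M^2) := by
  have h := (aux_convex M hM).2 hu hv ha hc hac
  simp only [smul_eq_mul] at h
  have hD : (0:ℝ) < 2*M^2 := by positivity
  have hc1 : c = 1 - a := by linarith
  subst hc1
  have h2 : a*(1-a)*(u-v)^2/(2*M^2) ≤ Real.log (a*u+(1-a)*v) - a*Real.log u - (1-a)*Real.log v := by
    rw [div_le_iff₀ hD]
    nlinarith [h]
  linarith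

theorem stmt_15 {m n : ℕ} (hm : 0 < m) (hn : 0 < n)
    (A : Matrix (Fin m) (Fin n) ℝ) (hA : ∀ i j, 0 ≤ A i j)
    (hAcol : ∀ j, ∑ i, A i j = 1)
    (b : Fin m → ℝ) (hb : ∀ j, 0 < b j)
    (y : Fin m → ℝ) (hy : ∀ j, 0 < y j)
    (hinj : Function.Injective (A.mulVec : (Fin n → ℝ) → (Fin m → ℝ)))
    (S : Set (EuclideanSpace ℝ (Fin n)))
    (hSb : Bornology.IsBounded S) (hSconv : Convex ℝ S)
    (hSsub : S ⊆ {x : EuclideanSpace ℝ (Fin n) | ∀ i, 0 ≤ x i}) :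
    ∃ m₀ : ℝ, 0 < m₀ ∧
      ConvexOn ℝ S (fun x =>
        (∑ j, (y j * Real.log (y j / ((∑ i, A j i * x i) + b j)) +
          ((∑ i, A j i * x i) + b j) - y j)) - m₀ / 2 * ‖x‖ ^ 2) := by
  haveI : Nonempty (Fin m) := ⟨⟨0, hm⟩⟩
  haveI : Nonempty (Fin n) := ⟨⟨0, hn⟩⟩
  classical
  -- radius bound
  obtain ⟨R, hR⟩ := hSb.subset_closedBall 0
  have hR'0 : 0 ≤ max R 0 := le_max_right _ _
  set R' : ℝ := max R 0 with hR'def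
  obtain ⟨M, hMpos, hMdef⟩ : ∃ M : ℝ, 0 < M ∧ M = n * R' + ∑ j, b j := by
    refine ⟨n * R' + ∑ j, b j, ?_, rfl⟩
    have hbsum : 0 < ∑ j, b j := Finset.sum_pos (fun j _ => hb j) Finset.univ_nonempty
    have : (0:ℝ) ≤ n * R' := by positivity
    linarith
  have hA1 : ∀ j i, A j i ≤ 1 := by
    intro j i
    have h1 : A j i ≤ ∑ i', A i' i :=
      Finset.single_le_sum (f := fun i' => A i' i) (fun i' _ => hA i' i) (Finset.mem_univ j)
    rw [hAcol i] at h1; exact h1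
  have habs : ∀ (w : EuclideanSpace ℝ (Fin n)) i, |w i| ≤ ‖w‖ := by
    intro w i
    rw [EuclideanSpace.norm_eq]
    have h1 : |w i| = Real.sqrt (‖w i‖^2) := by
      rw [Real.sqrt_sq_eq_abs, Real.norm_eq_abs, abs_abs]
    rw [h1]
    apply Real.sqrt_le_sqrt
    exact Finset.single_le_sum (f := fun i' => ‖w i'‖^2) (fun i' _ => sq_nonneg _)
      (Finset.mem_univ i)
  have hrange : ∀ x ∈ S, ∀ j, (∑ i, A j i * x i) + b j ∈ Set.Ioc 0 M := by
    intro x hx j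
    have hx0 : ∀ i, 0 ≤ x i := hSsub hx
    have hnorm : ‖x‖ ≤ R' := by
      have h1 := hR hx
      rw [Metric.mem_closedBall, dist_zero_right] at h1
      exact le_trans h1 (le_max_left _ _)
    have hxi : ∀ i, x i ≤ R' := fun i =>
      le_trans (le_trans (le_abs_self _) (habs x i)) hnorm
    constructor
    · have h2 : 0 ≤ ∑ i, A j i * x i :=
        Finset.sum_nonneg fun i _ => mul_nonneg (hA j i) (hx0 i)
      linarith [hb j]
    · have h1 : ∑ i, A j i * x i ≤ ∑ _i : Fin n, R' := by
        apply Finset.sum_le_sum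
        intro i _
        calc A j i * x i ≤ 1 * R' := mul_le_mul (hA1 j i) (hxi i) (hx0 i) zero_le_one
          _ = R' := one_mul _
      have h2 : (∑ _i : Fin n, R') = n * R' := by
        rw [Finset.sum_const, Finset.card_univ, Fintype.card_fin, nsmul_eq_mul]
      have h3 : b j ≤ ∑ j', b j' :=
        Finset.single_le_sum (fun j' _ => (hb j').le) (Finset.mem_univ j)
      rw [hMdef]
      linarith [h1, h2 ▸ h1]
  obtain ⟨lam, hlam, hlow⟩ : ∃ lam : ℝ, 0 < lam ∧
      ∀ w : EuclideanSpace ℝ (Fin n), lam * ‖w‖^2 ≤ ∑ j, y j * (∑ i, A j i * w i)^2 := by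
    set q : EuclideanSpace ℝ (Fin n) → ℝ := fun w => ∑ j, y j * (∑ i, A j i * w i)^2 with hqdef
    have hqc : Continuous q := by
      apply continuous_finset_sum
      intro j _
      apply Continuous.mul continuous_const
      apply Continuous.pow
      apply continuous_finset_sum
      intro i _
      exact Continuous.mul continuous_const (EuclideanSpace.proj i).continuous
    have hsne : (Metric.sphere (0 : EuclideanSpace ℝ (Fin n)) 1).Nonempty :=
      NormedSpace.sphere_nonempty.mpr zero_le_one
    obtain ⟨w₀, hw₀s, hw₀min⟩ :=
      (isCompact_sphere (0 : EuclideanSpace ℝ (Fin n)) 1).exists_isMinOn hsne hqc.continuousOn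
    have hw₀norm : ‖w₀‖ = 1 := mem_sphere_zero_iff_norm.mp hw₀s
    refine ⟨q w₀, ?_, ?_⟩
    · have hw₀ne : w₀ ≠ 0 := by
        intro h; rw [h, norm_zero] at hw₀norm; norm_num at hw₀norm
      have hAw : A.mulVec (w₀ : Fin n → ℝ) ≠ 0 := by
        intro h
        apply hw₀ne
        have : A.mulVec (w₀ : Fin n → ℝ) = A.mulVec (0 : Fin n → ℝ) := by
          rw [h, Matrix.mulVec_zero]
        exact WithLp.ofLp_injective 2 (hinj this)
      obtain ⟨j, hj⟩ := Function.ne_iff.mp hAw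
      have hj' : (∑ i, A j i * w₀ i) ≠ 0 := hj
      apply Finset.sum_pos'
      · exact fun j' _ => mul_nonneg (hy j').le (sq_nonneg _)
      · exact ⟨j, Finset.mem_univ j, mul_pos (hy j) (by positivity)⟩
    · intro w
      by_cases hw : w = 0
      · subst hw
        simp [hqdef]
      · have hnw : 0 < ‖w‖ := norm_pos_iff.mpr hw
        have hmem : (‖w‖⁻¹ • w) ∈ Metric.sphere (0 : EuclideanSpace ℝ (Fin n)) 1 := by
          rw [mem_sphere_zero_iff_norm, norm_smul, norm_inv, norm_norm,
            inv_mul_cancel₀ hnw.ne']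
        have h1 : q w₀ ≤ q (‖w‖⁻¹ • w) := hw₀min hmem
        have h2 : q (‖w‖⁻¹ • w) = (‖w‖⁻¹)^2 * q w := by
          simp only [hqdef]
          rw [Finset.mul_sum]
          apply Finset.sum_congr rfl
          intro j _
          have h3 : ∑ i, A j i * (‖w‖⁻¹ • w) i = ‖w‖⁻¹ * ∑ i, A j i * w i := by
            rw [Finset.mul_sum]
            apply Finset.sum_congr rfl
            intro i _
            have : (‖w‖⁻¹ • w) i = ‖w‖⁻¹ * w i := rfl
            rw [this]; ring
          rw [h3]; ring
        rw [h2] at h1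
        have h4 := mul_le_mul_of_nonneg_right h1 (sq_nonneg ‖w‖)
        calc q w₀ * ‖w‖^2 ≤ (‖w‖⁻¹)^2 * q w * ‖w‖^2 := h4
          _ = q w := by field_simp
  refine ⟨lam / M^2, by positivity, hSconv, ?_⟩
  intro x hx z hz a c ha hc hac
  simp only []
  have hc1 : c = 1 - a := by linarith
  subst hc1
  simp only [smul_eq_mul]
  -- coordinates of the convex combination
  have hmid : ∀ j : Fin m,
      (∑ i, A j i * (a • x + (1-a) • z) i) + b j
        = a * ((∑ i, A j i * x i) + b j) + (1-a) * ((∑ i, A j i * z i) + b j) := by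
    intro j
    have hcoord : ∀ i, (a • x + (1-a) • z) i = a * x i + (1-a) * z i := fun i => rfl
    simp only [hcoord]
    have h1 : ∑ i, A j i * (a * x i + (1-a) * z i)
        = a * (∑ i, A j i * x i) + (1-a) * (∑ i, A j i * z i) := by
      rw [Finset.mul_sum, Finset.mul_sum, ← Finset.sum_add_distrib]
      exact Finset.sum_congr rfl fun i _ => by ring
    rw [h1]; ring
  have hd : ∀ j : Fin m, (∑ i, A j i * x i) - (∑ i, A j i * z i)
      = ∑ i, A j i * (x - z) i := by
    intro j
    rw [← Finset.sum_sub_distrib]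
    apply Finset.sum_congr rfl
    intro i _
    have h1 : (x - z) i = x i - z i := rfl
    rw [h1]; ring
  -- per-coordinate strong convexity estimate
  have hj : ∀ j : Fin m,
      y j * Real.log (y j / ((∑ i, A j i * (a • x + (1-a) • z) i) + b j)) +
        ((∑ i, A j i * (a • x + (1-a) • z) i) + b j) - y j
      ≤ a * (y j * Real.log (y j / ((∑ i, A j i * x i) + b j)) +
            ((∑ i, A j i * x i) + b j) - y j)
        + (1-a) * (y j * Real.log (y j / ((∑ i, A j i * z i) + b j)) +
            ((∑ i, A j i * z i) + b j) - y j)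
        - y j * (a*(1-a)*((∑ i, A j i * x i) - (∑ i, A j i * z i))^2/(2*M^2)) := by
    intro j
    have hU := hrange x hx j
    have hV := hrange z hz j
    rw [hmid j]
    have hWmem : a • ((∑ i, A j i * x i) + b j) + (1-a) • ((∑ i, A j i * z i) + b j)
        ∈ Set.Ioc (0:ℝ) M := (convex_Ioc (0:ℝ) M) hU hV ha hc hac
    simp only [smul_eq_mul] at hWmem
    have hk := aux_key hMpos hU hV ha hc hac
    rw [Real.log_div (hy j).ne' hWmem.1.ne', Real.log_div (hy j).ne' hU.1.ne',
      Real.log_div (hy j).ne' hV.1.ne']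
    have h1 : (∑ i, A j i * x i) + b j - ((∑ i, A j i * z i) + b j)
        = (∑ i, A j i * x i) - (∑ i, A j i * z i) := by ring
    rw [h1] at hk
    have h2 := mul_le_mul_of_nonneg_left hk (hy j).le
    set E := a*(1-a)*((∑ i, A j i * x i) - (∑ i, A j i * z i))^2/(2*M^2) with hE
    nlinarith [h2]
  have hsum := Finset.sum_le_sum (fun j (_ : j ∈ Finset.univ) => hj j)
  have hsplit : ∑ j, (a * (y j * Real.log (y j / ((∑ i, A j i * x i) + b j)) +
            ((∑ i, A j i * x i) + b j) - y j)
        + (1-a) * (y j * Real.log (y j / ((∑ i, A j i * z i) + b j)) +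
            ((∑ i, A j i * z i) + b j) - y j)
        - y j * (a*(1-a)*((∑ i, A j i * x i) - (∑ i, A j i * z i))^2/(2*M^2)))
      = a * (∑ j, (y j * Real.log (y j / ((∑ i, A j i * x i) + b j)) +
            ((∑ i, A j i * x i) + b j) - y j))
        + (1-a) * (∑ j, (y j * Real.log (y j / ((∑ i, A j i * z i) + b j)) +
            ((∑ i, A j i * z i) + b j) - y j))
        - a*(1-a)/(2*M^2) * ∑ j, y j * (∑ i, A j i * (x - z) i)^2 := by
    rw [Finset.sum_sub_distrib, Finset.sum_add_distrib, ← Finset.mul_sum, ← Finset.mul_sum]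
    congr 1
    rw [Finset.mul_sum]
    apply Finset.sum_congr rfl
    intro j _
    rw [← hd j]
    ring
  rw [hsplit] at hsum
  have hscale : a*(1-a)/(2*M^2) * (lam * ‖x - z‖^2)
      ≤ a*(1-a)/(2*M^2) * ∑ j, y j * (∑ i, A j i * (x - z) i)^2 :=
    mul_le_mul_of_nonneg_left (hlow (x - z))
      (div_nonneg (mul_nonneg ha hc) (by positivity))
  have hni : a * ‖x‖^2 + (1-a) * ‖z‖^2 - ‖a • x + (1-a) • z‖^2 = a*(1-a)*‖x - z‖^2 := by
    have e1 : ‖a • x + (1-a) • z‖^2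
        = a^2*‖x‖^2 + 2*(a*(1-a))*(inner ℝ x z : ℝ) + (1-a)^2*‖z‖^2 := by
      rw [norm_add_sq_real, norm_smul, norm_smul, real_inner_smul_left, real_inner_smul_right]
      simp only [Real.norm_eq_abs, abs_of_nonneg ha, abs_of_nonneg hc, mul_pow]
      ring
    have e2 : ‖x - z‖^2 = ‖x‖^2 - 2*(inner ℝ x z : ℝ) + ‖z‖^2 := norm_sub_sq_real x z
    rw [e1, e2]; ring
  have hni2 : lam/M^2/2 * (a*‖x‖^2 + (1-a)*‖z‖^2 - ‖a • x + (1-a) • z‖^2)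
      = a*(1-a)/(2*M^2) * (lam * ‖x - z‖^2) := by
    rw [hni]; field_simp
  linarith [hsum, hscale, hni2]
end

section
/- The gradient of the generalized Kullback–Leibler divergence, ∇D_KL(x) = Aᵀ( e − y/(Ax+b) ), is Lipschitz continuous on the nonnegative orthant Ω = {x ∈ ℝⁿ : x ≥ 0} with Lipschitz constant L = ‖A‖² · max_{1≤j≤m} (y_j / b_j²), where ‖A‖ is the operator norm of the linear map x ↦ Ax with respect to the Euclidean norms. -/
theorem stmt_16 {m n : ℕ} (hm : 0 < m) (hn : 0 < n)
    (A : Matrix (Fin m) (Fin n) ℝ) (hA : ∀ i j, 0 ≤ A i j)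
    (hAcol : ∀ j, ∑ i, A i j = 1)
    (b : Fin m → ℝ) (hb : ∀ j, 0 < b j)
    (y : Fin m → ℝ) (hy : ∀ j, 0 ≤ y j)
    (gradDKL : EuclideanSpace ℝ (Fin n) → EuclideanSpace ℝ (Fin n))
    (hgrad : ∀ x, gradDKL x =
      (WithLp.toLp 2 (fun i => ∑ j, A j i * (1 - y j / ((∑ i', A j i' * x i') + b j))) :
        EuclideanSpace ℝ (Fin n)))
    (L : ℝ)
    (hL : L = ‖LinearMap.toContinuousLinearMap (Matrix.toEuclideanLin A)‖ ^ 2 *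
      (⨆ j, y j / (b j) ^ 2)) :
    ∀ x z : EuclideanSpace ℝ (Fin n), (∀ i, 0 ≤ x i) → (∀ i, 0 ≤ z i) →
      ‖gradDKL x - gradDKL z‖ ≤ L * ‖x - z‖ := by
  intro x z hx hz
  haveI : Nonempty (Fin m) := ⟨⟨0, hm⟩⟩
  set T := LinearMap.toContinuousLinearMap (Matrix.toEuclideanLin A) with hT
  set C : ℝ := ⨆ j, y j / (b j) ^ 2 with hC
  have hC0 : 0 ≤ C := Real.iSup_nonneg fun j =>
    div_nonneg (hy j) (sq_nonneg _)
  have hCle : ∀ j, y j / (b j) ^ 2 ≤ C := fun j =>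
    le_ciSup (f := fun j => y j / (b j) ^ 2) (Set.Finite.bddAbove (Set.finite_range _)) j
  -- u x j = (Ax+b)_j
  set u : EuclideanSpace ℝ (Fin n) → Fin m → ℝ :=
    fun v j => (∑ i', A j i' * v i') + b j with hu
  have hupos : ∀ (v : EuclideanSpace ℝ (Fin n)), (∀ i, 0 ≤ v i) → ∀ j, b j ≤ u v j := by
    intro v hv j
    have : (0:ℝ) ≤ ∑ i', A j i' * v i' :=
      Finset.sum_nonneg fun i _ => mul_nonneg (hA j i) (hv i)
    simp [hu]; linarith
  set w : EuclideanSpace ℝ (Fin m) := WithLp.toLp 2 (fun j => y j / u z j - y j / u x j) with hw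
  set d : EuclideanSpace ℝ (Fin m) := T (x - z) with hd
  have hdj : ∀ j, d j = u x j - u z j := by
    intro j
    have : d j = ∑ i', A j i' * (x - z) i' := rfl
    rw [this]
    simp [hu, Finset.sum_sub_distrib, mul_sub]
  -- gradient difference equals adjoint of T applied to w
  have hgd : gradDKL x - gradDKL z = ContinuousLinearMap.adjoint T w := by
    have h1 : ContinuousLinearMap.adjoint T =
        LinearMap.toContinuousLinearMap (Matrix.toEuclideanLin A.conjTranspose) := by
      rw [Matrix.toEuclideanLin_conjTranspose_eq_adjoint,
        LinearMap.adjoint_toContinuousLinearMap]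
    rw [h1]
    ext i
    have h2 : (LinearMap.toContinuousLinearMap (Matrix.toEuclideanLin A.conjTranspose) w) i
        = ∑ j, A j i * w j := by
      simp [Matrix.toEuclideanLin_apply, Matrix.mulVec, dotProduct,
        Matrix.conjTranspose_apply]
    rw [h2]
    show gradDKL x i - gradDKL z i = _
    rw [hgrad, hgrad]
    simp only [hw, hu, WithLp.ofLp_toLp]
    rw [← Finset.sum_sub_distrib]
    congr 1; funext j
    ring_nf
  -- componentwise bound on w
  have hwj : ∀ j, |w j| ≤ C * |d j| := by
    intro j
    have hbx := hupos x hx j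
    have hbz := hupos z hz j
    have hxp : 0 < u x j := lt_of_lt_of_le (hb j) hbx
    have hzp : 0 < u z j := lt_of_lt_of_le (hb j) hbz
    have hwval : w j = y j * (u x j - u z j) / (u x j * u z j) := by
      simp only [hw, WithLp.ofLp_toLp]
      field_simp [hw]
    rw [hwval, ← hdj j, abs_div, abs_mul]
    rw [abs_of_pos (mul_pos hxp hzp)]
    rw [abs_of_nonneg (hy j)]
    rw [div_le_iff₀ (mul_pos hxp hzp)]
    have h1 : y j ≤ C * (b j)^2 := (div_le_iff₀ (pow_pos (hb j) 2)).mp (hCle j)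
    have h2 : b j * b j ≤ u x j * u z j := mul_le_mul hbx hbz (hb j).le hxp.le
    calc y j * |d j| ≤ (C * (b j)^2) * |d j| :=
          mul_le_mul_of_nonneg_right h1 (abs_nonneg _)
      _ = C * |d j| * (b j * b j) := by ring
      _ ≤ C * |d j| * (u x j * u z j) :=
          mul_le_mul_of_nonneg_left h2 (mul_nonneg hC0 (abs_nonneg _))
  -- norm bound ‖w‖ ≤ C * ‖d‖
  have hwd : ‖w‖ ≤ C * ‖d‖ := by
    rw [EuclideanSpace.norm_eq w, EuclideanSpace.norm_eq d]
    have hsum : ∑ j, ‖w j‖ ^ 2 ≤ C ^ 2 * ∑ j, ‖d j‖ ^ 2 := by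
      rw [Finset.mul_sum]
      apply Finset.sum_le_sum
      intro j _
      rw [Real.norm_eq_abs, Real.norm_eq_abs]
      have h3 := mul_le_mul (hwj j) (hwj j) (abs_nonneg _)
        (mul_nonneg hC0 (abs_nonneg _))
      calc |w j| ^ 2 = |w j| * |w j| := by rw [pow_two]
        _ ≤ (C * |d j|) * (C * |d j|) := h3
        _ = C ^ 2 * |d j| ^ 2 := by ring
    calc Real.sqrt (∑ j, ‖w j‖ ^ 2) ≤ Real.sqrt (C ^ 2 * ∑ j, ‖d j‖ ^ 2) :=
          Real.sqrt_le_sqrt hsum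
      _ = C * Real.sqrt (∑ j, ‖d j‖ ^ 2) := by
          rw [Real.sqrt_mul (sq_nonneg C), Real.sqrt_sq hC0]
  -- combine
  rw [hgd, hL]
  calc ‖ContinuousLinearMap.adjoint T w‖
      ≤ ‖ContinuousLinearMap.adjoint T‖ * ‖w‖ := (ContinuousLinearMap.adjoint T).le_opNorm w
    _ = ‖T‖ * ‖w‖ := congrArg (· * ‖w‖) (ContinuousLinearMap.adjoint.norm_map T)
    _ ≤ ‖T‖ * (C * ‖d‖) := by
        exact mul_le_mul_of_nonneg_left hwd (norm_nonneg _)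
    _ ≤ ‖T‖ * (C * (‖T‖ * ‖x - z‖)) := by
        apply mul_le_mul_of_nonneg_left _ (norm_nonneg _)
        exact mul_le_mul_of_nonneg_left (T.le_opNorm (x - z)) hC0
    _ = ‖T‖ ^ 2 * C * ‖x - z‖ := by ring
end

section
/- The generalized Kullback–Leibler divergence D_KL is coercive on the nonnegative orthant: for every C ∈ ℝ there exists R > 0 such that D_KL(x) ≥ C for every x ∈ ℝⁿ with x ≥ 0 and ‖x‖ ≥ R. -/
lemma kl_term_lb (y s : ℝ) (hy : 0 ≤ y) (hs : 0 < s) :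
    s / 2 - y * Real.log 2 ≤ y * Real.log (y / s) + s - y := by
  rcases eq_or_lt_of_le hy with h | h
  · simp [← h]; linarith
  · have hlog : Real.log (s / (2 * y)) ≤ s / (2 * y) - 1 :=
      Real.log_le_sub_one_of_pos (by positivity)
    have h1 : Real.log (y / s) = Real.log y - Real.log s :=
      Real.log_div (ne_of_gt h) (ne_of_gt hs)
    have h2 : Real.log (s / (2 * y)) = Real.log s - (Real.log 2 + Real.log y) := by
      rw [Real.log_div (ne_of_gt hs) (by positivity),
        Real.log_mul two_ne_zero (ne_of_gt h)]
    have h3 : y * Real.log (s / (2 * y)) ≤ y * (s / (2 * y) - 1) :=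
      mul_le_mul_of_nonneg_left hlog h.le
    have h4 : y * (s / (2 * y) - 1) = s / 2 - y := by field_simp
    rw [h2] at h3
    rw [h1]
    nlinarith [h3, h4]

lemma norm_le_sum (n : ℕ) (x : EuclideanSpace ℝ (Fin n)) (hx : ∀ i, 0 ≤ x i) :
    ‖x‖ ≤ ∑ i, x i := by
  rw [EuclideanSpace.norm_eq]
  have h1 : ∑ i, ‖x i‖ ^ 2 ≤ (∑ i, x i) ^ 2 := by
    calc ∑ i, ‖x i‖ ^ 2 = ∑ i, (x i) ^ 2 := by
          simp [Real.norm_eq_abs, sq_abs]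
      _ ≤ (∑ i, x i) ^ 2 := Finset.sum_sq_le_sq_sum_of_nonneg fun i _ => hx i
  calc Real.sqrt (∑ i, ‖x i‖ ^ 2) ≤ Real.sqrt ((∑ i, x i) ^ 2) :=
        Real.sqrt_le_sqrt h1
    _ = ∑ i, x i := Real.sqrt_sq (Finset.sum_nonneg fun i _ => hx i)

theorem stmt_17 {m n : ℕ} (hm : 0 < m) (hn : 0 < n)
    (A : Matrix (Fin m) (Fin n) ℝ) (hA : ∀ i j, 0 ≤ A i j)
    (hAcol : ∀ j, ∑ i, A i j = 1)
    (b : Fin m → ℝ) (hb : ∀ j, 0 < b j)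
    (y : Fin m → ℝ) (hy : ∀ j, 0 ≤ y j) :
    ∀ C : ℝ, ∃ R : ℝ, 0 < R ∧
      ∀ x : EuclideanSpace ℝ (Fin n), (∀ i, 0 ≤ x i) → R ≤ ‖x‖ →
        C ≤ ∑ j, (y j * Real.log (y j / ((∑ i, A j i * x i) + b j)) +
          ((∑ i, A j i * x i) + b j) - y j) := by
  intro C
  refine ⟨max 1 (2 * (C + Real.log 2 * ∑ j, y j)), lt_of_lt_of_le one_pos (le_max_left _ _), ?_⟩
  intro x hx hR
  have hs : ∀ j : Fin m, 0 < (∑ i, A j i * x i) + b j := fun j =>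
    add_pos_of_nonneg_of_pos
      (Finset.sum_nonneg fun i _ => mul_nonneg (hA j i) (hx i)) (hb j)
  have hterm : ∀ j : Fin m,
      ((∑ i, A j i * x i) + b j) / 2 - y j * Real.log 2 ≤
        y j * Real.log (y j / ((∑ i, A j i * x i) + b j)) +
          ((∑ i, A j i * x i) + b j) - y j := fun j =>
    kl_term_lb (y j) _ (hy j) (hs j)
  have hsum : ∑ j, (((∑ i, A j i * x i) + b j) / 2 - y j * Real.log 2) ≤
      ∑ j, (y j * Real.log (y j / ((∑ i, A j i * x i) + b j)) +
        ((∑ i, A j i * x i) + b j) - y j) :=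
    Finset.sum_le_sum fun j _ => hterm j
  have hswap : ∑ j, ∑ i, A j i * x i = ∑ i, x i := by
    rw [Finset.sum_comm]
    simp_rw [← Finset.sum_mul, hAcol, one_mul]
  have hxs : ‖x‖ ≤ ∑ i, x i := norm_le_sum n x hx
  have hbpos : 0 ≤ ∑ j, b j := Finset.sum_nonneg fun j _ => (hb j).le
  have hRx : 2 * (C + Real.log 2 * ∑ j, y j) ≤ ∑ i, x i :=
    le_trans (le_trans (le_max_right _ _) hR) hxs
  have hexp : ∑ j, (((∑ i, A j i * x i) + b j) / 2 - y j * Real.log 2) =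
      ((∑ i, x i) + ∑ j, b j) / 2 - Real.log 2 * ∑ j, y j := by
    rw [Finset.sum_sub_distrib, ← Finset.sum_div, Finset.sum_add_distrib, hswap,
      ← Finset.sum_mul]
    ring
  rw [hexp] at hsum
  linarith
end

section
/- Suppose in addition that y_j ≥ 0 for all j, λ > 0, and S ⊆ {x ∈ ℝⁿ : x ≥ 0} is a nonempty, closed, convex set. Then the problem of minimizing D_KL(x) + λ·TV(x) over x ∈ S admits a solution, where TV(x) = Σ_{i=1}^N ‖L_i x‖ for a finite family of linear maps L_i : ℝⁿ → ℝ² (in the paper, the discrete difference operators D_i). If moreover y_j > 0 for all j and the linear map x ↦ Ax is injective, the solution is unique. -/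
open Real Set Finset

lemma aux_coercive_pt (Y g : ℝ) (hY : 0 ≤ Y) (hg : 0 < g) :
    g / 2 + (Y * Real.log Y - Y * Real.log (2 * Y + 1)) ≤ Y * Real.log (Y / g) + g - Y := by
  rcases eq_or_lt_of_le hY with h0 | hY
  · simp [← h0]; linarith
  · have hc : (0:ℝ) < 2 * Y + 1 := by linarith
    have hu : (0:ℝ) < g / (2 * Y + 1) := by positivity
    have h1 : Real.log (g / (2 * Y + 1)) ≤ g / (2 * Y + 1) - 1 :=
      Real.log_le_sub_one_of_pos hu
    have h2 : Real.log (g / (2 * Y + 1)) = Real.log g - Real.log (2 * Y + 1) :=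
      Real.log_div hg.ne' hc.ne'
    have h3 : Real.log (Y / g) = Real.log Y - Real.log g := Real.log_div hY.ne' hg.ne'
    have h5 : g / (2 * Y + 1) * (2 * Y + 1) = g := div_mul_cancel₀ _ hc.ne'
    nlinarith [mul_le_mul_of_nonneg_left h1 hY.le, mul_pos hY hu]

lemma aux_pos_comb (s t a c : ℝ) (hs : 0 < s) (ht : 0 < t)
    (ha : 0 ≤ a) (hc : 0 ≤ c) (hac : a + c = 1) : 0 < a * s + c * t := by
  have hm : 0 < min s t := lt_min hs ht
  nlinarith [mul_le_mul_of_nonneg_left (min_le_left s t) ha,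
    mul_le_mul_of_nonneg_left (min_le_right s t) hc]

lemma aux_convex_pt (Y s t a c : ℝ) (hY : 0 < Y) (hs : 0 < s) (ht : 0 < t)
    (ha : 0 ≤ a) (hc : 0 ≤ c) (hac : a + c = 1) :
    Y * Real.log (Y / (a * s + c * t)) + (a * s + c * t) - Y ≤
      a * (Y * Real.log (Y / s) + s - Y) + c * (Y * Real.log (Y / t) + t - Y) := by
  have hu : 0 < a * s + c * t := aux_pos_comb s t a c hs ht ha hc hac
  have hlog : a • Real.log s + c • Real.log t ≤ Real.log (a • s + c • t) :=
    strictConcaveOn_log_Ioi.concaveOn.2 (Set.mem_Ioi.2 hs) (Set.mem_Ioi.2 ht) ha hc hac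
  simp only [smul_eq_mul] at hlog
  rw [Real.log_div hY.ne' hu.ne', Real.log_div hY.ne' hs.ne', Real.log_div hY.ne' ht.ne']
  have hc' : c = 1 - a := by linarith
  subst hc'
  nlinarith [mul_le_mul_of_nonneg_left hlog hY.le]

lemma aux_strict_pt (Y s t a c : ℝ) (hY : 0 < Y) (hs : 0 < s) (ht : 0 < t)
    (hst : s ≠ t) (ha : 0 < a) (hc : 0 < c) (hac : a + c = 1) :
    Y * Real.log (Y / (a * s + c * t)) + (a * s + c * t) - Y <
      a * (Y * Real.log (Y / s) + s - Y) + c * (Y * Real.log (Y / t) + t - Y) := by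
  have hu : 0 < a * s + c * t := aux_pos_comb s t a c hs ht ha.le hc.le hac
  have hlog : a • Real.log s + c • Real.log t < Real.log (a • s + c • t) :=
    strictConcaveOn_log_Ioi.2 (Set.mem_Ioi.2 hs) (Set.mem_Ioi.2 ht) hst ha hc hac
  simp only [smul_eq_mul] at hlog
  rw [Real.log_div hY.ne' hu.ne', Real.log_div hY.ne' hs.ne', Real.log_div hY.ne' ht.ne']
  have hc' : c = 1 - a := by linarith
  subst hc'
  nlinarith [mul_lt_mul_of_pos_left hlog hY]

lemma aux_norm_le_sum {n : ℕ} (x : EuclideanSpace ℝ (Fin n)) (hx : ∀ i, 0 ≤ x i) :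
    ‖x‖ ≤ ∑ i, x i := by
  rw [EuclideanSpace.norm_eq]
  have h1 : ∀ i : Fin n, ‖x i‖ ^ 2 = x i ^ 2 := by intro i; rw [Real.norm_eq_abs, sq_abs]
  rw [Finset.sum_congr rfl fun i _ => h1 i]
  calc Real.sqrt (∑ i, x i ^ 2) ≤ Real.sqrt ((∑ i, x i) ^ 2) :=
        Real.sqrt_le_sqrt (Finset.sum_sq_le_sq_sum_of_nonneg fun i _ => hx i)
    _ = ∑ i, x i := Real.sqrt_sq (Finset.sum_nonneg fun i _ => hx i)

theorem stmt_19 {m n N : ℕ} (hm : 0 < m) (hn : 0 < n)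
    (A : Matrix (Fin m) (Fin n) ℝ) (hA : ∀ i j, 0 ≤ A i j)
    (hAcol : ∀ j, ∑ i, A i j = 1)
    (b : Fin m → ℝ) (hb : ∀ j, 0 < b j)
    (y : Fin m → ℝ) (hy : ∀ j, 0 ≤ y j)
    (lam : ℝ) (hlam : 0 < lam)
    (Lop : Fin N → EuclideanSpace ℝ (Fin n) →ₗ[ℝ] EuclideanSpace ℝ (Fin 2))
    (S : Set (EuclideanSpace ℝ (Fin n)))
    (hSne : S.Nonempty) (hScl : IsClosed S) (hSconv : Convex ℝ S)
    (hSsub : S ⊆ {x : EuclideanSpace ℝ (Fin n) | ∀ i, 0 ≤ x i})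
    (Φ : EuclideanSpace ℝ (Fin n) → ℝ)
    (hΦ : ∀ x, Φ x =
      (∑ j, (y j * Real.log (y j / ((∑ i, A j i * x i) + b j)) +
        ((∑ i, A j i * x i) + b j) - y j)) +
      lam * ∑ i, ‖Lop i x‖) :
    (∃ xstar ∈ S, ∀ z ∈ S, Φ xstar ≤ Φ z) ∧
    ((∀ j, 0 < y j) →
      Function.Injective (A.mulVec : (Fin n → ℝ) → (Fin m → ℝ)) →
      ∃! xstar : EuclideanSpace ℝ (Fin n), xstar ∈ S ∧ ∀ z ∈ S, Φ xstar ≤ Φ z) := by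
  let g : Fin m → EuclideanSpace ℝ (Fin n) → ℝ := fun j x => (∑ i, A j i * x i) + b j
  have hΦ' : ∀ x, Φ x = (∑ j, (y j * Real.log (y j / g j x) + g j x - y j)) +
      lam * ∑ i, ‖Lop i x‖ := hΦ
  have hgpos : ∀ x ∈ S, ∀ j, 0 < g j x := by
    intro x hx j
    have h1 : 0 ≤ ∑ i, A j i * x i :=
      Finset.sum_nonneg fun i _ => mul_nonneg (hA j i) (hSsub hx i)
    have := hb j
    simp only [g]
    linarith
  have hgcont : ∀ j, Continuous (g j) := by
    intro j
    exact (continuous_finset_sum _ fun i _ =>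
      continuous_const.mul ((continuous_apply i).comp (PiLp.continuous_ofLp 2 _))).add continuous_const
  have hgaff : ∀ (j : Fin m) (x z : EuclideanSpace ℝ (Fin n)) (a c : ℝ), a + c = 1 →
      g j (a • x + c • z) = a * g j x + c * g j z := by
    intro j x z a c hac
    simp only [g]
    have h1 : ∀ i ∈ Finset.univ, A j i * ((a • x + c • z) i) =
        a * (A j i * x i) + c * (A j i * z i) := by
      intro i _
      have : (a • x + c • z) i = a * x i + c * z i := by simp
      rw [this]; ring
    rw [Finset.sum_congr rfl h1, Finset.sum_add_distrib, ← Finset.mul_sum, ← Finset.mul_sum]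
    linear_combination (- b j) * hac
  have hsum_g : ∀ x : EuclideanSpace ℝ (Fin n), ∑ j, g j x = (∑ i, x i) + ∑ j, b j := by
    intro x
    simp only [g]
    rw [Finset.sum_add_distrib]
    congr 1
    rw [Finset.sum_comm]
    exact Finset.sum_congr rfl fun i _ => by rw [← Finset.sum_mul, hAcol, one_mul]
  set C0 : ℝ := ∑ j, (y j * Real.log (y j) - y j * Real.log (2 * y j + 1)) with hC0
  -- coercivity lower bound
  have hlb : ∀ x ∈ S, ‖x‖ / 2 + C0 ≤ Φ x := by
    intro x hx
    rw [hΦ' x]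
    have h1 : ∑ j, (g j x / 2 + (y j * Real.log (y j) - y j * Real.log (2 * y j + 1))) ≤
        ∑ j, (y j * Real.log (y j / g j x) + g j x - y j) :=
      Finset.sum_le_sum fun j _ => aux_coercive_pt (y j) (g j x) (hy j) (hgpos x hx j)
    rw [Finset.sum_add_distrib, ← Finset.sum_div, hsum_g] at h1
    have h2 : ‖x‖ ≤ ∑ i, x i := aux_norm_le_sum x (hSsub hx)
    have h3 : (0:ℝ) ≤ ∑ j, b j := Finset.sum_nonneg fun j _ => (hb j).le
    have h4 : 0 ≤ lam * ∑ i, ‖Lop i x‖ :=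
      mul_nonneg hlam.le (Finset.sum_nonneg fun i _ => norm_nonneg _)
    linarith
  -- continuity on S
  have hΦcont : ContinuousOn Φ S := by
    have heq : Φ = fun x => (∑ j, (y j * Real.log (y j / g j x) + g j x - y j)) +
        lam * ∑ i, ‖Lop i x‖ := funext hΦ'
    rw [heq]
    apply ContinuousOn.add
    · apply continuousOn_finset_sum
      intro j _
      by_cases hyj : y j = 0
      · have : (fun x : EuclideanSpace ℝ (Fin n) => y j * Real.log (y j / g j x) + g j x - y j) =
            fun x => g j x := by funext x; simp [hyj]
        rw [this]; exact (hgcont j).continuousOn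
      · apply ContinuousOn.sub _ continuousOn_const
        apply ContinuousOn.add _ (hgcont j).continuousOn
        apply ContinuousOn.mul continuousOn_const
        apply ContinuousOn.log
        · exact continuousOn_const.div (hgcont j).continuousOn
            fun x hx => (hgpos x hx j).ne'
        · exact fun x hx => div_ne_zero hyj (hgpos x hx j).ne'
    · exact (continuous_const.mul (continuous_finset_sum _ fun i _ =>
        ((Lop i).continuous_of_finiteDimensional).norm)).continuousOn
  -- existence
  obtain ⟨x₀, hx₀⟩ := hSne
  have hev : ∀ᶠ x in Filter.cocompact _ ⊓ Filter.principal S, Φ x₀ ≤ Φ x := by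
    rw [Filter.eventually_inf_principal]
    refine Filter.hasBasis_cocompact.eventually_iff.2
      ⟨Metric.closedBall 0 (2 * (Φ x₀ - C0)), isCompact_closedBall _ _, ?_⟩
    intro x hxK hxS
    have hR : 2 * (Φ x₀ - C0) < ‖x‖ := by
      simpa [Metric.mem_closedBall, dist_zero_right, not_le] using hxK
    have := hlb x hxS
    linarith
  have hexists : ∃ xstar ∈ S, ∀ z ∈ S, Φ xstar ≤ Φ z := by
    obtain ⟨xs, hxs, hmin⟩ := hΦcont.exists_isMinOn' hScl hx₀ hev
    exact ⟨xs, hxs, fun z hz => hmin hz⟩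
  refine ⟨hexists, fun hy' hinj => ?_⟩
  -- strict convexity
  have hsc : StrictConvexOn ℝ S Φ := by
    refine ⟨hSconv, fun x hx z hz hxz a c ha hc hac => ?_⟩
    have hw : a • x + c • z ∈ S := hSconv hx hz ha.le hc.le hac
    obtain ⟨j₀, hj₀⟩ : ∃ j, g j x ≠ g j z := by
      have h1 : A.mulVec x ≠ A.mulVec z := fun h => hxz (WithLp.ofLp_injective 2 (hinj h))
      obtain ⟨j, hj⟩ := Function.ne_iff.1 h1
      refine ⟨j, fun h => hj ?_⟩
      have hgx : g j x = A.mulVec x j + b j := by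
        simp [g, Matrix.mulVec, dotProduct]
      have hgz : g j z = A.mulVec z j + b j := by
        simp [g, Matrix.mulVec, dotProduct]
      rw [hgx, hgz] at h
      linarith
    have key : (∑ j, (y j * Real.log (y j / g j (a • x + c • z)) + g j (a • x + c • z) - y j)) <
        a * (∑ j, (y j * Real.log (y j / g j x) + g j x - y j)) +
        c * (∑ j, (y j * Real.log (y j / g j z) + g j z - y j)) := by
      rw [Finset.mul_sum, Finset.mul_sum, ← Finset.sum_add_distrib]
      apply Finset.sum_lt_sum
      · intro j _
        rw [hgaff j x z a c hac]
        exact aux_convex_pt (y j) (g j x) (g j z) a c (hy' j) (hgpos x hx j)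
          (hgpos z hz j) ha.le hc.le hac
      · refine ⟨j₀, Finset.mem_univ _, ?_⟩
        rw [hgaff j₀ x z a c hac]
        exact aux_strict_pt (y j₀) (g j₀ x) (g j₀ z) a c (hy' j₀) (hgpos x hx j₀)
          (hgpos z hz j₀) hj₀ ha hc hac
    have tv : (∑ i, ‖Lop i (a • x + c • z)‖) ≤
        a * (∑ i, ‖Lop i x‖) + c * (∑ i, ‖Lop i z‖) := by
      rw [Finset.mul_sum, Finset.mul_sum, ← Finset.sum_add_distrib]
      apply Finset.sum_le_sum
      intro i _
      calc ‖Lop i (a • x + c • z)‖ = ‖a • Lop i x + c • Lop i z‖ := by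
            rw [map_add, map_smul, map_smul]
        _ ≤ ‖a • Lop i x‖ + ‖c • Lop i z‖ := norm_add_le _ _
        _ = a * ‖Lop i x‖ + c * ‖Lop i z‖ := by
            rw [norm_smul, norm_smul, Real.norm_eq_abs, Real.norm_eq_abs,
              abs_of_pos ha, abs_of_pos hc]
    rw [hΦ' (a • x + c • z), hΦ' x, hΦ' z]
    simp only [smul_eq_mul]
    nlinarith [mul_le_mul_of_nonneg_left tv hlam.le]
  obtain ⟨xs, hxs, hmin⟩ := hexists
  refine ⟨xs, ⟨hxs, hmin⟩, fun z ⟨hzS, hzmin⟩ => ?_⟩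
  exact hsc.eq_of_isMinOn (isMinOn_iff.2 hzmin) (isMinOn_iff.2 hmin) hzS hxs
end
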